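/- arXiv:1911.04079 — 6 statements merged into one kernel-verified Lean document; each statement's English description precedes it below -/
import Mathlib

section
/- Let N = {1,…,2n} carry a coloring with exactly n black and n white nodes. If ρ is a pairing of N that is both black-white and odd-even, then sign_OE(ρ) = sign_BW(ρ). -/
namespace DD

/-- The node set `{1, …, 2n}`. -/
def nodes (n : ℕ) : Finset ℕ := Finset.Icc 1 (2 * n)

/-- `ρ` is a pairing of `{1,…,2n}`: a fixed-point-free involution of the node set. -/
structure IsPairing (n : ℕ) (ρ : ℕ → ℕ) : Prop where
  maps : ∀ i ∈ nodes n, ρ i ∈ nodes n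
  invol : ∀ i ∈ nodes n, ρ (ρ i) = i
  nofix : ∀ i ∈ nodes n, ρ i ≠ i

/-- Number of crossings of `ρ` among pairs of `ρ` contained in `A`:
a crossing is a pair of pairs `(a,c)`, `(b,d)` of `ρ` with `a < b < c < d`. -/
def numCrossingsOn (A : Finset ℕ) (ρ : ℕ → ℕ) : ℕ :=
  ((A ×ˢ A).filter (fun p => p.1 < p.2 ∧ p.2 < ρ p.1 ∧ ρ p.1 < ρ p.2)).card

/-- Number of crossings of a pairing of `{1,…,2n}`. -/
def numCrossings (n : ℕ) (ρ : ℕ → ℕ) : ℕ := numCrossingsOn (nodes n) ρ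

/-- A pairing is planar if it has no crossings. -/
def IsPlanar (n : ℕ) (ρ : ℕ → ℕ) : Prop := numCrossings n ρ = 0

/-- A coloring `c : ℕ → Bool` of the nodes: `true` = black, `false` = white.
A black-white pairing pairs each black node with a white node. -/
def IsBW (n : ℕ) (c : ℕ → Bool) (ρ : ℕ → ℕ) : Prop :=
  ∀ i ∈ nodes n, c (ρ i) = !(c i)

/-- An odd-even pairing pairs each odd node with an even node. -/
def IsOE (n : ℕ) (ρ : ℕ → ℕ) : Prop :=
  ∀ i ∈ nodes n, ρ i % 2 ≠ i % 2

/-- The coloring has exactly `n` black (hence exactly `n` white) nodes. -/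
def BalancedColoring (n : ℕ) (c : ℕ → Bool) : Prop :=
  ((nodes n).filter (fun i => c i = true)).card = n

/-- The black nodes. -/
def blacks (n : ℕ) (c : ℕ → Bool) : Finset ℕ := (nodes n).filter (fun i => c i = true)

/-- The white nodes. -/
def whites (n : ℕ) (c : ℕ → Bool) : Finset ℕ := (nodes n).filter (fun i => c i = false)

/-- `sign_BW(ρ)`: the sign of the permutation sending `i` to the rank of `w_i = ρ(b_i)`
among the white nodes, computed as `(-1)` to the number of inversions, i.e. the number of
pairs of black nodes `b < b'` with `ρ b > ρ b'`. -/
def signBW (n : ℕ) (c : ℕ → Bool) (ρ : ℕ → ℕ) : ℤ :=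
  (-1 : ℤ) ^ (((nodes n ×ˢ nodes n).filter
    (fun p => c p.1 = true ∧ c p.2 = true ∧ p.1 < p.2 ∧ ρ p.2 < ρ p.1)).card)

/-- `sign_OE(π)`: the sign of the permutation sending `i` to `π(2i−1)/2`, computed as
`(-1)` to the number of pairs of odd nodes `a < b` with `π a > π b`. -/
def signOE (n : ℕ) (π : ℕ → ℕ) : ℤ :=
  (-1 : ℤ) ^ (((nodes n ×ˢ nodes n).filter
    (fun p => p.1 % 2 = 1 ∧ p.2 % 2 = 1 ∧ p.1 < p.2 ∧ π p.2 < π p.1)).card)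

/-- `a_{b,w}`: the number of indices `i` with `min b w ≤ i < max b w` such that nodes `i`
and `i+1` have the same color. -/
def aCount (c : ℕ → Bool) (b w : ℕ) : ℕ :=
  ((Finset.Ico (min b w) (max b w)).filter (fun i => c i = c (i + 1))).card

/-- `sign(b,w) = (−1)^{(|b−w| + a_{b,w} − 1)/2}` for a black node `b` and white node `w`. -/
def pairSign (c : ℕ → Bool) (b w : ℕ) : ℤ :=
  (-1 : ℤ) ^ ((max b w - min b w + aCount c b w - 1) / 2)

/-- Cyclic successor of node `m` in `{1,…,2n}`. -/
def nextNode (n m : ℕ) : ℕ := if m = 2 * n then 1 else m + 1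

/-- Couples of consecutive nodes of the same color, cyclically: indices `m ∈ {1,…,2n}`
with nodes `m` and `m+1` (cyclically) of the same color. -/
def couples (n : ℕ) (c : ℕ → Bool) : Finset ℕ :=
  (nodes n).filter (fun m => c m = c (nextNode n m))

/-- The value `φ(m)` for a couple `m`: writing `r` for the rank of `m` among couples of its
own color, `φ(m) = 2r` if `m` has the same color as node `1`, and `φ(m) = 2r − 1` otherwise. -/
def phiCouple (n : ℕ) (c : ℕ → Bool) (m : ℕ) : ℕ :=
  if c m = c 1 then 2 * ((couples n c).filter (fun m' => c m' = c m ∧ m' ≤ m)).card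
  else 2 * ((couples n c).filter (fun m' => c m' = c m ∧ m' ≤ m)).card - 1

/-- `sign_cons(N)`: the sign of the one-line permutation `(φ(n₁),…,φ(n_{2k}))`, computed
as `(-1)` to its number of inversions. -/
def signCons (n : ℕ) (c : ℕ → Bool) : ℤ :=
  (-1 : ℤ) ^ (((couples n c ×ˢ couples n c).filter
    (fun p => p.1 < p.2 ∧ phiCouple n c p.2 < phiCouple n c p.1)).card)

/-- The set `T` of nodes that are odd and white, or even and black. -/
def Tset (n : ℕ) (c : ℕ → Bool) : Finset ℕ :=
  (nodes n).filter (fun i => (i % 2 = 1 ∧ c i = false) ∨ (i % 2 = 0 ∧ c i = true))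

/-- A subset is balanced if it contains equally many black and white nodes. -/
def BalancedSubset (c : ℕ → Bool) (S : Finset ℕ) : Prop :=
  (S.filter (fun i => c i = true)).card = (S.filter (fun i => c i = false)).card

/-- `ρ` does not connect `S` to its complement: `ρ(S) = S`. -/
def Invariant (S : Finset ℕ) (ρ : ℕ → ℕ) : Prop := ∀ i ∈ S, ρ i ∈ S

/-- Reachability under the subgroup generated by the involutions `π` and `ρ`. -/
def compRel (n : ℕ) (π ρ : ℕ → ℕ) (a b : ℕ) : Prop :=
  Relation.ReflTransGen (fun u v => u ∈ nodes n ∧ (v = π u ∨ v = ρ u)) a b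

open scoped Classical in
/-- The number of components (orbits) of `π ∪ ρ` on the node set. -/
noncomputable def numComponents (n : ℕ) (π ρ : ℕ → ℕ) : ℕ :=
  ((nodes n).image (fun a => (nodes n).filter (fun b => compRel n π ρ a b))).card


namespace S4

/-- sort a pair increasingly -/
def sortPair (x y : ℕ) : ℕ × ℕ := if x < y then (x, y) else (y, x)

def Sinv (n : ℕ) (ρ : ℕ → ℕ) (q : ℕ → Bool) : Finset (ℕ × ℕ) :=
  (nodes n ×ˢ nodes n).filter
    (fun p => q p.1 = true ∧ q p.2 = true ∧ p.1 < p.2 ∧ ρ p.2 < ρ p.1)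

def Snest (n : ℕ) (ρ : ℕ → ℕ) : Finset (ℕ × ℕ) :=
  (nodes n ×ˢ nodes n).filter
    (fun p => p.1 < ρ p.1 ∧ p.2 < ρ p.2 ∧ p.1 < p.2 ∧ ρ p.2 < ρ p.1)

def Scross (n : ℕ) (ρ : ℕ → ℕ) (q : ℕ → Bool) : Finset (ℕ × ℕ) :=
  (nodes n ×ˢ nodes n).filter
    (fun p => p.1 < ρ p.1 ∧ p.2 < ρ p.2 ∧ p.1 < p.2 ∧ p.2 < ρ p.1 ∧ ρ p.1 < ρ p.2 ∧
      q p.1 ≠ q p.2)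

variable {n : ℕ} {ρ : ℕ → ℕ} {q : ℕ → Bool}

lemma card_sinv (hρ : IsPairing n ρ) (hq : ∀ i ∈ nodes n, q (ρ i) = !q i) :
    (Sinv n ρ q).card = (Snest n ρ ∪ Scross n ρ q).card := by
  apply Finset.card_nbij'
    (i := fun p => sortPair (min p.1 (ρ p.1)) (min p.2 (ρ p.2)))
    (j := fun p => sortPair (if q p.1 = true then p.1 else ρ p.1)
                            (if q p.2 = true then p.2 else ρ p.2))
  · -- maps forward
    rintro ⟨a, b⟩ hp
    simp only [Sinv, Finset.mem_coe, Finset.mem_filter, Finset.mem_product] at hp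
    obtain ⟨⟨ha, hb⟩, hqa, hqb, hab, hinv⟩ := hp
    have haa : ρ (ρ a) = a := hρ.invol a ha
    have hbb : ρ (ρ b) = b := hρ.invol b hb
    have hfa : ρ a ≠ a := hρ.nofix a ha
    have hfb : ρ b ≠ b := hρ.nofix b hb
    have hρa : ρ a ∈ nodes n := hρ.maps a ha
    have hρb : ρ b ∈ nodes n := hρ.maps b hb
    have hqa' : q (ρ a) = false := by rw [hq a ha, hqa]; rfl
    have hqb' : q (ρ b) = false := by rw [hq b hb, hqb]; rfl
    have hbρa : b ≠ ρ a := by rintro rfl; rw [hqa'] at hqb; exact Bool.false_ne_true hqb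
    have haρb : a ≠ ρ b := by rintro rfl; rw [hqb'] at hqa; exact Bool.false_ne_true hqa
    have hρab : ρ a ≠ ρ b := by
      intro h; have := congrArg ρ h; rw [haa, hbb] at this; omega
    dsimp only
    rcases hfa.lt_or_gt with h1 | h1
    · -- ρ a < a, config 6
      have h2 : ρ b < b := by omega
      have e : sortPair (min a (ρ a)) (min b (ρ b)) = (ρ b, ρ a) := by
        rw [show min a (ρ a) = ρ a by omega, show min b (ρ b) = ρ b by omega,
          sortPair, if_neg (by omega)]
      rw [e]
      refine Finset.mem_union_left _ ?_
      simp only [Snest, Finset.mem_filter, Finset.mem_product, haa, hbb]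
      exact ⟨⟨hρb, hρa⟩, by omega, by omega, by omega, by omega⟩
    · rcases hfb.lt_or_gt with h2 | h2
      · -- a < ρ a, ρ b < b
        rcases (Ne.lt_or_gt haρb) with h3 | h3
        · -- a < ρ b
          rcases (Ne.lt_or_gt hbρa) with h4 | h4
          · -- b < ρ a : config 2, nest (a, ρ b)
            have e : sortPair (min a (ρ a)) (min b (ρ b)) = (a, ρ b) := by
              rw [show min a (ρ a) = a by omega, show min b (ρ b) = ρ b by omega,
                sortPair, if_pos (by omega)]
            rw [e]
            refine Finset.mem_union_left _ ?_
            simp only [Snest, Finset.mem_filter, Finset.mem_product, haa, hbb]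
            exact ⟨⟨ha, hρb⟩, by omega, by omega, by omega, by omega⟩
          · -- ρ a < b : config 5, cross (a, ρ b)
            have e : sortPair (min a (ρ a)) (min b (ρ b)) = (a, ρ b) := by
              rw [show min a (ρ a) = a by omega, show min b (ρ b) = ρ b by omega,
                sortPair, if_pos (by omega)]
            rw [e]
            refine Finset.mem_union_right _ ?_
            simp only [Scross, Finset.mem_filter, Finset.mem_product, haa, hbb]
            refine ⟨⟨ha, hρb⟩, by omega, by omega, by omega, by omega, by omega, ?_⟩
            simp [hqa, hqb']
        · -- ρ b < a
          rcases (Ne.lt_or_gt hbρa) with h4 | h4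
          · -- b < ρ a : config 3, cross (ρ b, a)
            have e : sortPair (min a (ρ a)) (min b (ρ b)) = (ρ b, a) := by
              rw [show min a (ρ a) = a by omega, show min b (ρ b) = ρ b by omega,
                sortPair, if_neg (by omega)]
            rw [e]
            refine Finset.mem_union_right _ ?_
            simp only [Scross, Finset.mem_filter, Finset.mem_product, haa, hbb]
            refine ⟨⟨hρb, ha⟩, by omega, by omega, by omega, by omega, by omega, ?_⟩
            simp [hqa, hqb']
          · -- ρ a < b : config 4, nest (ρ b, a)
            have e : sortPair (min a (ρ a)) (min b (ρ b)) = (ρ b, a) := by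
              rw [show min a (ρ a) = a by omega, show min b (ρ b) = ρ b by omega,
                sortPair, if_neg (by omega)]
            rw [e]
            refine Finset.mem_union_left _ ?_
            simp only [Snest, Finset.mem_filter, Finset.mem_product, haa, hbb]
            exact ⟨⟨hρb, ha⟩, by omega, by omega, by omega, by omega⟩
      · -- a < ρ a, b < ρ b : config 1, nest (a, b)
        have e : sortPair (min a (ρ a)) (min b (ρ b)) = (a, b) := by
          rw [show min a (ρ a) = a by omega, show min b (ρ b) = b by omega,
            sortPair, if_pos hab]
        rw [e]
        refine Finset.mem_union_left _ ?_
        simp only [Snest, Finset.mem_filter, Finset.mem_product]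
        exact ⟨⟨ha, hb⟩, by omega, by omega, hab, hinv⟩
  · -- maps backward
    rintro ⟨u, v⟩ hp
    rw [Finset.mem_coe, Finset.mem_union] at hp
    dsimp only
    rcases hp with hp | hp
    · -- nest
      simp only [Snest, Finset.mem_filter, Finset.mem_product] at hp
      obtain ⟨⟨hu, hv⟩, h1, h2, h3, h4⟩ := hp
      have huu : ρ (ρ u) = u := hρ.invol u hu
      have hvv : ρ (ρ v) = v := hρ.invol v hv
      have hρu : ρ u ∈ nodes n := hρ.maps u hu
      have hρv : ρ v ∈ nodes n := hρ.maps v hv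
      have hqu' : q (ρ u) = !q u := hq u hu
      have hqv' : q (ρ v) = !q v := hq v hv
      by_cases hqu : q u = true <;> by_cases hqv : q v = true
      · have e : sortPair (if q u = true then u else ρ u) (if q v = true then v else ρ v)
            = (u, v) := by rw [if_pos hqu, if_pos hqv, sortPair, if_pos h3]
        rw [e]
        simp only [Sinv, Finset.mem_coe, Finset.mem_filter, Finset.mem_product]
        exact ⟨⟨hu, hv⟩, hqu, hqv, h3, h4⟩
      · have e : sortPair (if q u = true then u else ρ u) (if q v = true then v else ρ v)
            = (u, ρ v) := by rw [if_pos hqu, if_neg hqv, sortPair, if_pos (by omega)]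
        rw [e]
        simp only [Sinv, Finset.mem_coe, Finset.mem_filter, Finset.mem_product, hvv]
        refine ⟨⟨hu, hρv⟩, hqu, ?_, by omega, by omega⟩
        rw [hqv']; simp [Bool.not_eq_true] at hqv; rw [hqv]; rfl
      · have e : sortPair (if q u = true then u else ρ u) (if q v = true then v else ρ v)
            = (v, ρ u) := by rw [if_neg hqu, if_pos hqv, sortPair, if_neg (by omega)]
        rw [e]
        simp only [Sinv, Finset.mem_coe, Finset.mem_filter, Finset.mem_product, huu]
        refine ⟨⟨hv, hρu⟩, hqv, ?_, by omega, by omega⟩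
        rw [hqu']; simp [Bool.not_eq_true] at hqu; rw [hqu]; rfl
      · have e : sortPair (if q u = true then u else ρ u) (if q v = true then v else ρ v)
            = (ρ v, ρ u) := by rw [if_neg hqu, if_neg hqv, sortPair, if_neg (by omega)]
        rw [e]
        simp only [Sinv, Finset.mem_coe, Finset.mem_filter, Finset.mem_product, huu, hvv]
        refine ⟨⟨hρv, hρu⟩, ?_, ?_, by omega, by omega⟩
        · rw [hqv']; simp [Bool.not_eq_true] at hqv; rw [hqv]; rfl
        · rw [hqu']; simp [Bool.not_eq_true] at hqu; rw [hqu]; rfl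
    · -- cross
      simp only [Scross, Finset.mem_filter, Finset.mem_product] at hp
      obtain ⟨⟨hu, hv⟩, h1, h2, h3, h4, h5, h6⟩ := hp
      have huu : ρ (ρ u) = u := hρ.invol u hu
      have hvv : ρ (ρ v) = v := hρ.invol v hv
      have hρu : ρ u ∈ nodes n := hρ.maps u hu
      have hρv : ρ v ∈ nodes n := hρ.maps v hv
      have hqu' : q (ρ u) = !q u := hq u hu
      have hqv' : q (ρ v) = !q v := hq v hv
      by_cases hqu : q u = true
      · have hqv : q v = false := by
          cases hv' : q v
          · rfl
          · exact absurd (by rw [hqu, hv']) h6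
        have e : sortPair (if q u = true then u else ρ u) (if q v = true then v else ρ v)
            = (u, ρ v) := by
          rw [if_pos hqu, if_neg (by simp [hqv]), sortPair, if_pos (by omega)]
        rw [e]
        simp only [Sinv, Finset.mem_coe, Finset.mem_filter, Finset.mem_product, hvv]
        refine ⟨⟨hu, hρv⟩, hqu, ?_, by omega, by omega⟩
        rw [hqv', hqv]; rfl
      · have hqu2 : q u = false := by cases hu' : q u; rfl; exact absurd hu' hqu
        have hqv : q v = true := by
          cases hv' : q v
          · exact absurd (by rw [hqu2, hv']) h6
          · rfl
        have e : sortPair (if q u = true then u else ρ u) (if q v = true then v else ρ v)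
            = (v, ρ u) := by rw [if_neg hqu, if_pos hqv, sortPair, if_neg (by omega)]
        rw [e]
        simp only [Sinv, Finset.mem_coe, Finset.mem_filter, Finset.mem_product, huu]
        refine ⟨⟨hv, hρu⟩, hqv, ?_, by omega, by omega⟩
        rw [hqu', hqu2]; rfl
  · -- left inverse
    rintro ⟨a, b⟩ hp
    simp only [Sinv, Finset.mem_coe, Finset.mem_filter, Finset.mem_product] at hp
    obtain ⟨⟨ha, hb⟩, hqa, hqb, hab, hinv⟩ := hp
    have haa : ρ (ρ a) = a := hρ.invol a ha
    have hbb : ρ (ρ b) = b := hρ.invol b hb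
    have hfa : ρ a ≠ a := hρ.nofix a ha
    have hfb : ρ b ≠ b := hρ.nofix b hb
    have hqa' : q (ρ a) = false := by rw [hq a ha, hqa]; rfl
    have hqb' : q (ρ b) = false := by rw [hq b hb, hqb]; rfl
    have k1 : (if q (min a (ρ a)) = true then min a (ρ a) else ρ (min a (ρ a))) = a := by
      rcases hfa.lt_or_gt with h | h
      · rw [show min a (ρ a) = ρ a by omega, hqa', if_neg (by simp), haa]
      · rw [show min a (ρ a) = a by omega, if_pos hqa]
    have k2 : (if q (min b (ρ b)) = true then min b (ρ b) else ρ (min b (ρ b))) = b := by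
      rcases hfb.lt_or_gt with h | h
      · rw [show min b (ρ b) = ρ b by omega, hqb', if_neg (by simp), hbb]
      · rw [show min b (ρ b) = b by omega, if_pos hqb]
    dsimp only
    by_cases hm : min a (ρ a) < min b (ρ b)
    · rw [show sortPair (min a (ρ a)) (min b (ρ b)) = (min a (ρ a), min b (ρ b)) from by
        rw [sortPair, if_pos hm]]
      dsimp only
      rw [k1, k2, sortPair, if_pos hab]
    · rw [show sortPair (min a (ρ a)) (min b (ρ b)) = (min b (ρ b), min a (ρ a)) from by
        rw [sortPair, if_neg hm]]
      dsimp only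
      rw [k2, k1, sortPair, if_neg (by omega)]
  · -- right inverse
    rintro ⟨u, v⟩ hp
    rw [Finset.mem_coe, Finset.mem_union] at hp
    have hmem : u ∈ nodes n ∧ v ∈ nodes n ∧ u < ρ u ∧ v < ρ v ∧ u < v := by
      rcases hp with hp | hp
      · simp only [Snest, Finset.mem_filter, Finset.mem_product] at hp
        exact ⟨hp.1.1, hp.1.2, hp.2.1, hp.2.2.1, hp.2.2.2.1⟩
      · simp only [Scross, Finset.mem_filter, Finset.mem_product] at hp
        exact ⟨hp.1.1, hp.1.2, hp.2.1, hp.2.2.1, hp.2.2.2.1⟩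
    obtain ⟨hu, hv, h1, h2, h3⟩ := hmem
    have huu : ρ (ρ u) = u := hρ.invol u hu
    have hvv : ρ (ρ v) = v := hρ.invol v hv
    have k1 : min (if q u = true then u else ρ u) (ρ (if q u = true then u else ρ u)) = u := by
      by_cases hqu : q u = true
      · rw [if_pos hqu]; omega
      · rw [if_neg hqu, huu]; omega
    have k2 : min (if q v = true then v else ρ v) (ρ (if q v = true then v else ρ v)) = v := by
      by_cases hqv : q v = true
      · rw [if_pos hqv]; omega
      · rw [if_neg hqv, hvv]; omega
    dsimp only
    by_cases hm : (if q u = true then u else ρ u) < (if q v = true then v else ρ v)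
    · rw [show sortPair (if q u = true then u else ρ u) (if q v = true then v else ρ v)
          = ((if q u = true then u else ρ u), (if q v = true then v else ρ v)) from by
        rw [sortPair, if_pos hm]]
      dsimp only
      rw [k1, k2, sortPair, if_pos h3]
    · rw [show sortPair (if q u = true then u else ρ u) (if q v = true then v else ρ v)
          = ((if q v = true then v else ρ v), (if q u = true then u else ρ u)) from by
        rw [sortPair, if_neg hm]]
      dsimp only
      rw [k2, k1, sortPair, if_neg (by omega)]


/-- A finset with a fixed-point-free involution has even cardinality. -/
lemma even_card_of_invol (f : ℕ → ℕ) (S : Finset ℕ) :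
    (∀ x ∈ S, f x ∈ S) → (∀ x ∈ S, f (f x) = x) → (∀ x ∈ S, f x ≠ x) → Even S.card := by
  classical
  induction S using Finset.strongInduction with
  | _ S ih =>
    intro hmap hinv hfix
    rcases S.eq_empty_or_nonempty with rfl | ⟨x, hx⟩
    · simp
    · have hfx : f x ∈ S := hmap x hx
      have hxne : f x ≠ x := hfix x hx
      have hsub : ({x, f x} : Finset ℕ) ⊆ S := by
        intro y hy
        simp only [Finset.mem_insert, Finset.mem_singleton] at hy
        rcases hy with rfl | rfl
        · exact hx
        · exact hfx
      have h2 : ({x, f x} : Finset ℕ).card = 2 := by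
        rw [Finset.card_insert_of_notMem (by simp [Ne.symm hxne]), Finset.card_singleton]
      have hle := Finset.card_le_card hsub
      have hcard : S.card = (S \ {x, f x}).card + 2 := by
        rw [Finset.card_sdiff_of_subset hsub, h2]; omega
      have hss : S \ {x, f x} ⊂ S := Finset.sdiff_ssubset hsub (by simp)
      have hev := ih (S \ {x, f x}) hss
        (fun y hy => by
          simp only [Finset.mem_sdiff, Finset.mem_insert, Finset.mem_singleton] at hy ⊢
          obtain ⟨hyS, hy2⟩ := hy
          push_neg at hy2 ⊢
          refine ⟨hmap y hyS, ?_, ?_⟩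
          · intro h
            exact hy2.2 (by have := congrArg f h; rw [hinv y hyS] at this; exact this)
          · intro h
            exact hy2.1 (by have := congrArg f h; rw [hinv y hyS, hinv x hx] at this; exact this))
        (fun y hy => hinv y (Finset.mem_sdiff.mp hy).1)
        (fun y hy => hfix y (Finset.mem_sdiff.mp hy).1)
      rcases hev with ⟨k, hk⟩
      exact ⟨k + 1, by omega⟩

/-- The crossing condition: the chords of left endpoints `u < v` cross. -/
def crossCond (ρ : ℕ → ℕ) (u v : ℕ) : Prop :=
  u < ρ u ∧ v < ρ v ∧ u < v ∧ v < ρ u ∧ ρ u < ρ v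

instance (ρ : ℕ → ℕ) (u v : ℕ) : Decidable (crossCond ρ u v) := by
  unfold crossCond; infer_instance

lemma AB_even (hρ : IsPairing n ρ) (hoe : IsOE n ρ) (u : ℕ) (hu : u ∈ nodes n) :
    Even (((nodes n).filter (fun v => crossCond ρ u v)).card
      + ((nodes n).filter (fun w => crossCond ρ w u)).card) := by
  by_cases hcu : u < ρ u
  · have hρu : ρ u ∈ nodes n := hρ.maps u hu
    have huu : ρ (ρ u) = u := hρ.invol u hu
    have huN : 1 ≤ u ∧ u ≤ 2*n := Finset.mem_Icc.mp hu
    have hρuN : 1 ≤ ρ u ∧ ρ u ≤ 2*n := Finset.mem_Icc.mp hρu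
    have hIN : ∀ x ∈ Finset.Ioo u (ρ u), x ∈ nodes n := by
      intro x hx; rw [Finset.mem_Ioo] at hx; exact Finset.mem_Icc.mpr (by omega)
    have hIcard : Even (Finset.Ioo u (ρ u)).card := by
      rw [Nat.card_Ioo]
      have := hoe u hu
      rw [Nat.even_iff]; omega
    have hc1 : Even (((Finset.Ioo u (ρ u)).filter (fun x => ρ x ∈ Finset.Ioo u (ρ u))).card) := by
      apply even_card_of_invol ρ
      · intro x hx
        rw [Finset.mem_filter] at hx ⊢
        exact ⟨hx.2, by rw [hρ.invol x (hIN x hx.1)]; exact hx.1⟩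
      · intro x hx; exact hρ.invol x (hIN x (Finset.mem_filter.mp hx).1)
      · intro x hx; exact hρ.nofix x (hIN x (Finset.mem_filter.mp hx).1)
    have hsplit := Finset.card_filter_add_card_filter_not
      (s := Finset.Ioo u (ρ u)) (p := fun x => ρ x ∈ Finset.Ioo u (ρ u))
    have hc2 : Even (((Finset.Ioo u (ρ u)).filter (fun x => ¬ ρ x ∈ Finset.Ioo u (ρ u))).card) := by
      rcases hIcard with ⟨k, hk⟩; rcases hc1 with ⟨m, hm⟩; exact ⟨k - m, by omega⟩
    have hA : (nodes n).filter (fun v => crossCond ρ u v)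
        = (Finset.Ioo u (ρ u)).filter (fun x => ρ u < ρ x) := by
      ext v
      simp only [Finset.mem_filter, Finset.mem_Ioo, nodes, Finset.mem_Icc]
      simp only [crossCond]
      constructor
      · rintro ⟨hvN, h1, h2, h3, h4, h5⟩; exact ⟨⟨h3, h4⟩, h5⟩
      · rintro ⟨⟨h3, h4⟩, h5⟩
        exact ⟨⟨by omega, by omega⟩, hcu, by omega, h3, h4, h5⟩
    have hB : ((nodes n).filter (fun w => crossCond ρ w u)).card
        = ((Finset.Ioo u (ρ u)).filter (fun x => ρ x < u)).card := by
      apply Finset.card_nbij' ρ ρ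
      · intro w hw
        simp only [Finset.mem_coe, Finset.mem_filter] at hw
        simp only [crossCond] at hw
        obtain ⟨hwN, h1, h2, h3, h4, h5⟩ := hw
        have hww : ρ (ρ w) = w := hρ.invol w hwN
        simp only [Finset.mem_coe, Finset.mem_filter, Finset.mem_Ioo, hww]
        exact ⟨⟨h4, h5⟩, h3⟩
      · intro x hx
        simp only [Finset.mem_coe, Finset.mem_filter, Finset.mem_Ioo] at hx
        obtain ⟨⟨h3, h4⟩, h5⟩ := hx
        have hxN : x ∈ nodes n := hIN x (Finset.mem_Ioo.mpr ⟨h3, h4⟩)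
        have hxx : ρ (ρ x) = x := hρ.invol x hxN
        simp only [Finset.mem_coe, Finset.mem_filter]
        simp only [crossCond, hxx]
        exact ⟨hρ.maps x hxN, by omega, hcu, h5, by omega, h4⟩
      · intro w hw
        simp only [Finset.mem_coe, Finset.mem_filter] at hw
        simp only [crossCond] at hw
        exact hρ.invol w hw.1
      · intro x hx
        simp only [Finset.mem_coe, Finset.mem_filter, Finset.mem_Ioo] at hx
        exact hρ.invol x (hIN x (Finset.mem_Ioo.mpr hx.1))
    have hdisj : Disjoint ((Finset.Ioo u (ρ u)).filter (fun x => ρ u < ρ x))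
        ((Finset.Ioo u (ρ u)).filter (fun x => ρ x < u)) := by
      rw [Finset.disjoint_left]
      intro x h1 h2
      simp only [Finset.mem_filter] at h1 h2
      omega
    have hunion : ((Finset.Ioo u (ρ u)).filter (fun x => ¬ ρ x ∈ Finset.Ioo u (ρ u))).card
        = ((Finset.Ioo u (ρ u)).filter (fun x => ρ u < ρ x)).card
          + ((Finset.Ioo u (ρ u)).filter (fun x => ρ x < u)).card := by
      rw [← Finset.card_union_of_disjoint hdisj]
      congr 1
      ext x
      simp only [Finset.mem_union, Finset.mem_filter, Finset.mem_Ioo]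
      constructor
      · rintro ⟨hx, hnx⟩
        have hxN : x ∈ nodes n := hIN x (Finset.mem_Ioo.mpr hx)
        have hxx : ρ (ρ x) = x := hρ.invol x hxN
        have hne1 : ρ x ≠ u := by
          intro h; have := congrArg ρ h; rw [hxx] at this; omega
        have hne2 : ρ x ≠ ρ u := by
          intro h; have := congrArg ρ h; rw [hxx, huu] at this; omega
        by_cases hgt : ρ u < ρ x
        · exact Or.inl ⟨hx, hgt⟩
        · refine Or.inr ⟨hx, ?_⟩
          rcases Nat.lt_or_ge (ρ x) u with h | h
          · exact h
          · exact absurd ⟨by omega, by omega⟩ hnx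
      · rintro (⟨hx, h⟩ | ⟨hx, h⟩) <;> exact ⟨hx, by omega⟩
    rw [hA, hB, ← hunion]
    exact hc2
  · have e1 : (nodes n).filter (fun v => crossCond ρ u v) = ∅ :=
      Finset.filter_false_of_mem (fun v _ h => hcu h.1)
    have e2 : (nodes n).filter (fun w => crossCond ρ w u) = ∅ :=
      Finset.filter_false_of_mem (fun w _ h => hcu h.2.1)
    rw [e1, e2]
    simp

lemma natCast_even_zmod2 {m : ℕ} (h : Even m) : (m : ZMod 2) = 0 := by
  rcases h with ⟨k, hk⟩
  subst hk
  push_cast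
  rw [← two_mul, show (2 : ZMod 2) = 0 from rfl, zero_mul]

lemma scross_even (hρ : IsPairing n ρ) (hoe : IsOE n ρ) : Even (Scross n ρ q).card := by
  classical
  have e0 : (Scross n ρ q) = (nodes n ×ˢ nodes n).filter
      (fun p => crossCond ρ p.1 p.2 ∧ q p.1 ≠ q p.2) := by
    ext p
    simp only [Scross, Finset.mem_filter]
    simp only [crossCond]
    tauto
  have key : (((Scross n ρ q).card : ℕ) : ZMod 2) = 0 := by
    rw [e0, Finset.natCast_card_filter]
    have e2 : ∀ p : ℕ × ℕ,
        (if crossCond ρ p.1 p.2 ∧ q p.1 ≠ q p.2 then (1 : ZMod 2) else 0)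
        = (if crossCond ρ p.1 p.2 then (if q p.1 = true then (1 : ZMod 2) else 0) else 0)
          + (if crossCond ρ p.1 p.2 then (if q p.2 = true then (1 : ZMod 2) else 0) else 0) := by
      intro p
      by_cases hc : crossCond ρ p.1 p.2
      · rw [if_pos hc, if_pos hc]
        cases hq1 : q p.1 <;> cases hq2 : q p.2 <;> simp [hc, hq1, hq2] <;> decide
      · rw [if_neg (fun h => hc h.1), if_neg hc, if_neg hc, add_zero]
    rw [Finset.sum_congr rfl (fun p _ => e2 p), Finset.sum_add_distrib]
    have hL : (∑ p ∈ nodes n ×ˢ nodes n,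
        (if crossCond ρ p.1 p.2 then (if q p.1 = true then (1 : ZMod 2) else 0) else 0))
        = ∑ u ∈ nodes n, (if q u = true then (1 : ZMod 2) else 0)
            * (((nodes n).filter (fun v => crossCond ρ u v)).card : ZMod 2) := by
      rw [Finset.sum_product]
      refine Finset.sum_congr rfl (fun u _ => ?_)
      rw [← Finset.sum_boole, Finset.mul_sum]
      refine Finset.sum_congr rfl (fun v _ => ?_)
      by_cases hc : crossCond ρ u v <;> simp [hc]
    have hR : (∑ p ∈ nodes n ×ˢ nodes n,
        (if crossCond ρ p.1 p.2 then (if q p.2 = true then (1 : ZMod 2) else 0) else 0))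
        = ∑ u ∈ nodes n, (if q u = true then (1 : ZMod 2) else 0)
            * (((nodes n).filter (fun w => crossCond ρ w u)).card : ZMod 2) := by
      rw [Finset.sum_product, Finset.sum_comm]
      refine Finset.sum_congr rfl (fun v _ => ?_)
      rw [← Finset.sum_boole, Finset.mul_sum]
      refine Finset.sum_congr rfl (fun u _ => ?_)
      by_cases hc : crossCond ρ u v <;> simp [hc]
    rw [hL, hR, ← Finset.sum_add_distrib]
    refine Finset.sum_eq_zero (fun u hu => ?_)
    rw [← mul_add, ← Nat.cast_add, natCast_even_zmod2 (AB_even hρ hoe u hu), mul_zero]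
  have := (ZMod.natCast_eq_zero_iff _ 2).mp key
  exact even_iff_two_dvd.mpr this

lemma snest_scross_disjoint : Disjoint (Snest n ρ) (Scross n ρ q) := by
  rw [Finset.disjoint_left]
  intro p h1 h2
  simp only [Snest, Finset.mem_filter] at h1
  simp only [Scross, Finset.mem_filter] at h2
  omega

lemma sinv_mod (hρ : IsPairing n ρ) (hoe : IsOE n ρ)
    (hq : ∀ i ∈ nodes n, q (ρ i) = !q i) :
    (Sinv n ρ q).card % 2 = (Snest n ρ).card % 2 := by
  rw [card_sinv hρ hq, Finset.card_union_of_disjoint snest_scross_disjoint]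
  rcases scross_even (q := q) hρ hoe with ⟨k, hk⟩
  omega

end S4

/-- Lemma 2.1.2: if `ρ` is both a black-white pairing and an odd-even
pairing, then `sign_OE(ρ) = sign_BW(ρ)`. -/
theorem statement4 (n : ℕ) (c : ℕ → Bool) (hbal : BalancedColoring n c)
    (ρ : ℕ → ℕ) (hρ : IsPairing n ρ) (hbw : IsBW n c ρ) (hoe : IsOE n ρ) :
    signOE n ρ = signBW n c ρ := by
  classical
  have hqodd : ∀ i ∈ nodes n,
      (fun j => decide (j % 2 = 1)) (ρ i) = !(fun j => decide (j % 2 = 1)) i := by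
    intro i hi
    have h := hoe i hi
    have h1 := Nat.mod_two_eq_zero_or_one i
    have h2 := Nat.mod_two_eq_zero_or_one (ρ i)
    rcases h1 with h1 | h1 <;> rcases h2 with h2 | h2 <;> simp [h1, h2] <;> omega
  have e1 : signOE n ρ = (-1 : ℤ) ^ (S4.Sinv n ρ (fun j => decide (j % 2 = 1))).card := by
    unfold signOE S4.Sinv
    have : ((nodes n ×ˢ nodes n).filter
        (fun p : ℕ × ℕ => p.1 % 2 = 1 ∧ p.2 % 2 = 1 ∧ p.1 < p.2 ∧ ρ p.2 < ρ p.1))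
        = ((nodes n ×ˢ nodes n).filter
        (fun p : ℕ × ℕ => decide (p.1 % 2 = 1) = true ∧ decide (p.2 % 2 = 1) = true ∧
          p.1 < p.2 ∧ ρ p.2 < ρ p.1)) := by
      ext p
      simp only [Finset.mem_filter, decide_eq_true_eq]
    rw [this]
  have e2 : signBW n c ρ = (-1 : ℤ) ^ (S4.Sinv n ρ c).card := rfl
  have m1 := S4.sinv_mod (q := fun j => decide (j % 2 = 1)) hρ hoe hqodd
  have m2 := S4.sinv_mod (q := c) hρ hoe (fun i hi => hbw i hi)
  rw [e1, e2]
  rcases Nat.even_or_odd ((S4.Sinv n ρ (fun j => decide (j % 2 = 1))).card) with he | ho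
  · rw [he.neg_one_pow,
      (show Even (S4.Sinv n ρ c).card by
        rw [Nat.even_iff] at he ⊢; omega).neg_one_pow]
  · rw [ho.neg_one_pow,
      (show Odd (S4.Sinv n ρ c).card by
        rw [Nat.odd_iff] at ho ⊢; omega).neg_one_pow]
end DD
end

section
/- Let N = {1,…,2n} carry a coloring with exactly n black and n white nodes. Let x < y be white nodes such that every node strictly between x and y is black, and set ℓ = y − x − 1 ≥ 1. If b is a black node with b < x or b > y, then sign(b, x) = (−1)^ℓ · sign(b, y). -/
namespace DD

/-- Auxiliary: same-color step count on `Ico u v`. -/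
def sCount (c : ℕ → Bool) (u v : ℕ) : ℕ :=
  ((Finset.Ico u v).filter (fun i => c i = c (i + 1))).card

lemma aCount_eq_sCount (c : ℕ → Bool) (b w : ℕ) :
    aCount c b w = sCount c (min b w) (max b w) := rfl

lemma sCount_succ (c : ℕ → Bool) {u v : ℕ} (hv : u ≤ v) :
    sCount c u (v + 1) = sCount c u v + (if c v = c (v + 1) then 1 else 0) := by
  unfold sCount
  have hins : Finset.Ico u (v + 1) = insert v (Finset.Ico u v) := by
    ext j; simp only [Finset.mem_Ico, Finset.mem_insert]; omega
  rw [hins, Finset.filter_insert]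
  split
  · rw [Finset.card_insert_of_notMem (by simp)]
  · simp

lemma sCount_parity (c : ℕ → Bool) (u : ℕ) :
    ∀ v, u ≤ v → ((v - u) + sCount c u v) % 2 = if c u = c v then 0 else 1 := by
  intro v hv
  induction v, hv using Nat.le_induction with
  | base => simp [sCount]
  | succ v hv ih =>
    rw [sCount_succ c hv]
    rcases Bool.eq_false_or_eq_true (c u) with h1 | h1 <;>
    rcases Bool.eq_false_or_eq_true (c v) with h2 | h2 <;>
    rcases Bool.eq_false_or_eq_true (c (v + 1)) with h3 | h3 <;>
    simp [h1, h2, h3] at ih ⊢ <;> omega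

lemma sCount_add (c : ℕ → Bool) {u v w : ℕ} (h1 : u ≤ v) (h2 : v ≤ w) :
    sCount c u w = sCount c u v + sCount c v w := by
  unfold sCount
  rw [← Finset.card_union_of_disjoint, ← Finset.filter_union, Finset.Ico_union_Ico_eq_Ico h1 h2]
  exact Finset.disjoint_filter_filter (Finset.Ico_disjoint_Ico_consecutive u v w)

lemma sCount_mid (c : ℕ → Bool) {x y : ℕ} (hcx : c x = false) (hcy : c y = false)
    (hmid : ∀ i, x < i → i < y → c i = true) (hl : x + 2 ≤ y) :
    sCount c x y = y - x - 2 := by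
  unfold sCount
  have : (Finset.Ico x y).filter (fun i => c i = c (i + 1)) = Finset.Ico (x + 1) (y - 1) := by
    ext i
    simp only [Finset.mem_filter, Finset.mem_Ico]
    constructor
    · rintro ⟨⟨hi1, hi2⟩, hsame⟩
      by_contra hcon
      push_neg at hcon
      rcases Nat.lt_or_ge i (x + 1) with h | h
      · have hix : i = x := by omega
        have ht : c (x + 1) = true := hmid (x + 1) (by omega) (by omega)
        rw [hix, hcx, ht] at hsame; simp at hsame
      · have hiy : i + 1 = y := by omega
        have ht : c i = true := hmid i (by omega) (by omega)
        rw [hiy, hcy, ht] at hsame; simp at hsame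
    · rintro ⟨hi1, hi2⟩
      refine ⟨⟨by omega, by omega⟩, ?_⟩
      rw [hmid i (by omega) (by omega), hmid (i + 1) (by omega) (by omega)]
  rw [this, Nat.card_Ico]
  omega

/-- Lemma 2.1.24: `x < y` white with all `ℓ ≥ 1` nodes strictly between
them black; for a black node `b` outside `[x+1, y−1]`, `sign(b,x) = (−1)^ℓ sign(b,y)`. -/
theorem statement6 (n : ℕ) (c : ℕ → Bool) (hbal : BalancedColoring n c)
    (x y b : ℕ) (hx : x ∈ nodes n) (hy : y ∈ nodes n) (hb : b ∈ nodes n)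
    (hxy : x < y) (hcx : c x = false) (hcy : c y = false)
    (hmid : ∀ i, x < i → i < y → c i = true)
    (hl : 1 ≤ y - x - 1)
    (hcb : c b = true) (hbout : b < x ∨ y < b) :
    pairSign c b x = (-1 : ℤ) ^ (y - x - 1) * pairSign c b y := by
  have hly : x + 2 ≤ y := by omega
  have hcbx : ¬ (c b = c x) := by rw [hcb, hcx]; simp
  have hcby : ¬ (c b = c y) := by rw [hcb, hcy]; simp
  have hmidc := sCount_mid c hcx hcy hmid hly
  have hsq : ∀ k : ℕ, ((-1 : ℤ) ^ k) * ((-1 : ℤ) ^ k) = 1 := by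
    intro k; rw [← pow_add, ← two_mul, pow_mul]; simp
  rcases hbout with hbx | hby
  · -- b < x
    have hax : aCount c b x = sCount c b x := by
      rw [aCount_eq_sCount, min_eq_left (by omega), max_eq_right (by omega)]
    have hay : aCount c b y = sCount c b x + (y - x - 2) := by
      rw [aCount_eq_sCount, min_eq_left (by omega), max_eq_right (by omega),
        sCount_add c (show b ≤ x by omega) (by omega), hmidc]
    have hpx := sCount_parity c b x (by omega)
    rw [if_neg hcbx] at hpx
    unfold pairSign
    rw [hax, hay, min_eq_left (by omega), max_eq_right (by omega),
      min_eq_left (by omega), max_eq_right (by omega)]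
    have he : (y - b + (sCount c b x + (y - x - 2)) - 1) / 2
        = (x - b + sCount c b x - 1) / 2 + (y - x - 1) := by omega
    rw [he, pow_add, mul_comm, mul_assoc, hsq, mul_one]
  · -- y < b
    have hay : aCount c b y = sCount c y b := by
      rw [aCount_eq_sCount, min_eq_right (by omega), max_eq_left (by omega)]
    have hax : aCount c b x = (y - x - 2) + sCount c y b := by
      rw [aCount_eq_sCount, min_eq_right (by omega), max_eq_left (by omega),
        sCount_add c (show x ≤ y by omega) (by omega), hmidc]
    have hpy := sCount_parity c y b (by omega)
    have hcyb : ¬ (c y = c b) := by rw [hcb, hcy]; simp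
    rw [if_neg hcyb] at hpy
    unfold pairSign
    rw [hax, hay, min_eq_right (by omega), max_eq_left (by omega),
      min_eq_right (by omega), max_eq_left (by omega)]
    have he : (b - x + ((y - x - 2) + sCount c y b) - 1) / 2
        = (b - y + sCount c y b - 1) / 2 + (y - x - 1) := by omega
    rw [he, pow_add, mul_comm]


end DD
end

section
/- Let N = {1,…,2n} carry a coloring with exactly n black and n white nodes. Let x < y be white nodes such that every node strictly between x and y is black, and set ℓ = y − x − 1 ≥ 1. If b is a black node strictly between x and y, say b = x + j with 1 ≤ j ≤ ℓ, then sign(b, x) = (−1)^{ℓ−1} · sign(b, y). -/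
namespace DD

/-- Lemma 2.1.25: `x < y` white with all `ℓ ≥ 1` nodes strictly between
them black; for a black node `b = x + j` strictly between them,
`sign(b,x) = (−1)^{ℓ−1} sign(b,y)`. -/
theorem statement7 (n : ℕ) (c : ℕ → Bool) (hbal : BalancedColoring n c)
    (x y b : ℕ) (hx : x ∈ nodes n) (hy : y ∈ nodes n) (hb : b ∈ nodes n)
    (hxy : x < y) (hcx : c x = false) (hcy : c y = false)
    (hmid : ∀ i, x < i → i < y → c i = true)
    (hl : 1 ≤ y - x - 1)
    (hcb : c b = true)
    (j : ℕ) (hj1 : 1 ≤ j) (hjl : j ≤ y - x - 1) (hbj : b = x + j) :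
    pairSign c b x = (-1 : ℤ) ^ (y - x - 1 - 1) * pairSign c b y := by
  have hxb : x < b := by omega
  have hby : b < y := by omega
  -- compute aCount c b x
  have ha1 : aCount c b x = j - 1 := by
    have hset : (Finset.Ico (min b x) (max b x)).filter (fun i => c i = c (i + 1))
        = Finset.Ico (x + 1) b := by
      ext i
      simp only [Finset.mem_filter, Finset.mem_Ico, min_eq_right hxb.le, max_eq_left hxb.le]
      constructor
      · rintro ⟨⟨h1, h2⟩, h3⟩
        refine ⟨?_, h2⟩
        by_contra h
        have hix : i = x := by omega
        rw [hix, hcx, hmid (x + 1) (by omega) (by omega)] at h3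
        simp at h3
      · rintro ⟨h1, h2⟩
        refine ⟨⟨by omega, h2⟩, ?_⟩
        rw [hmid i (by omega) (by omega), hmid (i+1) (by omega) (by omega)]
    rw [aCount, hset, Nat.card_Ico]; omega
  have ha2 : aCount c b y = y - x - 1 - j := by
    have hset : (Finset.Ico (min b y) (max b y)).filter (fun i => c i = c (i + 1))
        = Finset.Ico b (y - 1) := by
      ext i
      simp only [Finset.mem_filter, Finset.mem_Ico, min_eq_left hby.le, max_eq_right hby.le]
      constructor
      · rintro ⟨⟨h1, h2⟩, h3⟩
        refine ⟨h1, ?_⟩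
        by_contra h
        have : i = y - 1 := by omega
        subst this
        have hc : c (y - 1) = true := hmid _ (by omega) (by omega)
        have : y - 1 + 1 = y := by omega
        rw [hc, this, hcy] at h3; exact absurd h3 (by simp)
      · rintro ⟨h1, h2⟩
        refine ⟨⟨h1, by omega⟩, ?_⟩
        rw [hmid i (by omega) (by omega), hmid (i+1) (by omega) (by omega)]
    rw [aCount, hset, Nat.card_Ico]; omega
  rw [pairSign, pairSign, ha1, ha2, min_eq_right hxb.le, max_eq_left hxb.le,
    min_eq_left hby.le, max_eq_right hby.le]
  have e1 : (b - x + (j - 1) - 1) / 2 = j - 1 := by omega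
  have e2 : (y - b + (y - x - 1 - j) - 1) / 2 = y - x - 1 - j := by omega
  rw [e1, e2, ← pow_add]
  rw [neg_one_pow_eq_pow_mod_two, neg_one_pow_eq_pow_mod_two (n := y - x - 1 - 1 + (y - x - 1 - j))]
  congr 1
  omega

end DD
end

section
/- Let ρ be a pairing of N = {1,…,2n}, and let x < y be nodes with ρ(x) ≠ y such that no node strictly between x and y is paired with another node strictly between x and y. Let ρ' be the pairing obtained from ρ by swapping the locations of x and y. Then: (1) if ρ(x) and ρ(y) both lie strictly between x and y, the numbers of crossings of ρ and ρ' have opposite parity; (2) if exactly one of ρ(x), ρ(y) lies strictly between x and y, the numbers of crossings of ρ and ρ' have the same parity; (3) if neither ρ(x) nor ρ(y) lies strictly between x and y, the numbers of crossings of ρ and ρ' have opposite parity. -/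
namespace DD

private lemma zmod_two_add_self (c : ZMod 2) : c + c = 0 := by revert c; decide

lemma chordG (f F w z : ℕ) (_hwz : w ≠ z) (hwf : w ≠ f) (hwF : w ≠ F) (hzf : z ≠ f) (hzF : z ≠ F) :
    ((if f < w ∧ w < F ∧ F < z then (1:ZMod 2) else 0) +
     (if w < f ∧ f < z ∧ z < F then (1:ZMod 2) else 0) +
     (if f < z ∧ z < F ∧ F < w then (1:ZMod 2) else 0) +
     (if z < f ∧ f < w ∧ w < F then (1:ZMod 2) else 0))
    = (if f < w ∧ w < F then (1:ZMod 2) else 0) + (if f < z ∧ z < F then (1:ZMod 2) else 0) := by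
  split_ifs <;> first | decide | (exfalso; omega)

lemma mixedZero (f F x y u v : ℕ)
    (hxy : x ≠ y) (hxu : x ≠ u) (hxv : x ≠ v) (hyu : y ≠ u) (hyv : y ≠ v) (huv : u ≠ v)
    (hfx : f ≠ x) (hfy : f ≠ y) (hfu : f ≠ u) (hfv : f ≠ v)
    (hFx : F ≠ x) (hFy : F ≠ y) (hFu : F ≠ u) (hFv : F ≠ v) :
    ((if f < x ∧ x < F ∧ F < u then (1:ZMod 2) else 0) +
     (if x < f ∧ f < u ∧ u < F then (1:ZMod 2) else 0) +
     (if f < u ∧ u < F ∧ F < x then (1:ZMod 2) else 0) +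
     (if u < f ∧ f < x ∧ x < F then (1:ZMod 2) else 0) +
     ((if f < y ∧ y < F ∧ F < v then (1:ZMod 2) else 0) +
      (if y < f ∧ f < v ∧ v < F then (1:ZMod 2) else 0) +
      (if f < v ∧ v < F ∧ F < y then (1:ZMod 2) else 0) +
      (if v < f ∧ f < y ∧ y < F then (1:ZMod 2) else 0)) +
     ((if f < x ∧ x < F ∧ F < v then (1:ZMod 2) else 0) +
      (if x < f ∧ f < v ∧ v < F then (1:ZMod 2) else 0) +
      (if f < v ∧ v < F ∧ F < x then (1:ZMod 2) else 0) +
      (if v < f ∧ f < x ∧ x < F then (1:ZMod 2) else 0)) +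
     ((if f < y ∧ y < F ∧ F < u then (1:ZMod 2) else 0) +
      (if y < f ∧ f < u ∧ u < F then (1:ZMod 2) else 0) +
      (if f < u ∧ u < F ∧ F < y then (1:ZMod 2) else 0) +
      (if u < f ∧ f < y ∧ y < F then (1:ZMod 2) else 0))) = 0 := by
  rw [chordG f F x u (by omega) (by omega) (by omega) (by omega) (by omega),
      chordG f F y v (by omega) (by omega) (by omega) (by omega) (by omega),
      chordG f F x v (by omega) (by omega) (by omega) (by omega) (by omega),
      chordG f F y u (by omega) (by omega) (by omega) (by omega) (by omega)]
  generalize (if f < x ∧ x < F then (1:ZMod 2) else 0) = a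
  generalize (if f < y ∧ y < F then (1:ZMod 2) else 0) = b
  generalize (if f < u ∧ u < F then (1:ZMod 2) else 0) = c
  generalize (if f < v ∧ v < F then (1:ZMod 2) else 0) = d
  revert a b c d; decide

private def ind (ρ : ℕ → ℕ) (a b : ℕ) : ZMod 2 :=
  if a < b ∧ b < ρ a ∧ ρ a < ρ b then 1 else 0

private lemma cast_numCrossings (n : ℕ) (ρ : ℕ → ℕ) :
    ((numCrossings n ρ : ℕ) : ZMod 2) = ∑ a ∈ nodes n, ∑ b ∈ nodes n, ind ρ a b := by
  unfold numCrossings numCrossingsOn ind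
  rw [Finset.card_filter]
  push_cast
  rw [Finset.sum_product]

private lemma key (n : ℕ) (ρ : ℕ → ℕ) (hρ : IsPairing n ρ) (x y : ℕ)
    (hx : x ∈ nodes n) (hy : y ∈ nodes n) (hxy : x < y) (hne : ρ x ≠ y) :
    ((numCrossings n (fun a => Equiv.swap x y (ρ (Equiv.swap x y a))) + numCrossings n ρ : ℕ) : ZMod 2)
      = ∑ a ∈ ({x, y, ρ x, ρ y} : Finset ℕ), ∑ b ∈ ({x, y, ρ x, ρ y} : Finset ℕ),
          (ind (fun a => Equiv.swap x y (ρ (Equiv.swap x y a))) a b + ind ρ a b) := by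
  set ρ' : ℕ → ℕ := fun a => Equiv.swap x y (ρ (Equiv.swap x y a)) with hρ'def
  -- basic distinctness
  have hxu : x ≠ ρ x := Ne.symm (hρ.nofix x hx)
  have hyv : y ≠ ρ y := Ne.symm (hρ.nofix y hy)
  have hyu : y ≠ ρ x := Ne.symm hne
  have hxv : x ≠ ρ y := by
    intro h
    have := hρ.invol y hy
    rw [← h] at this
    exact hne (by omega)
  have huv : ρ x ≠ ρ y := by
    intro h
    have h1 := hρ.invol x hx
    have h2 := hρ.invol y hy
    rw [h] at h1; omega
  set N := nodes n with hN
  set E : Finset ℕ := {x, y, ρ x, ρ y} with hE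
  have hEN : E ⊆ N := by
    rw [hE]
    intro t ht
    simp only [Finset.mem_insert, Finset.mem_singleton] at ht
    rcases ht with h|h|h|h <;> subst h
    · exact hx
    · exact hy
    · exact hρ.maps x hx
    · exact hρ.maps y hy
  -- values of ρ' on special points
  have hswx : Equiv.swap x y x = y := Equiv.swap_apply_left x y
  have hswy : Equiv.swap x y y = x := Equiv.swap_apply_right x y
  have hswu : Equiv.swap x y (ρ x) = ρ x := Equiv.swap_apply_of_ne_of_ne hxu.symm hyu.symm
  have hswv : Equiv.swap x y (ρ y) = ρ y := Equiv.swap_apply_of_ne_of_ne hxv.symm hyv.symm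
  have hρ'x : ρ' x = ρ y := by rw [hρ'def]; simp only []; rw [hswx, hswv]
  have hρ'y : ρ' y = ρ x := by rw [hρ'def]; simp only []; rw [hswy, hswu]
  have hρ'u : ρ' (ρ x) = y := by
    rw [hρ'def]; simp only []; rw [hswu, hρ.invol x hx, hswx]
  have hρ'v : ρ' (ρ y) = x := by
    rw [hρ'def]; simp only []; rw [hswv, hρ.invol y hy, hswy]
  have hρ'f : ∀ f ∈ N \ E, ρ' f = ρ f := by
    intro f hf
    rw [Finset.mem_sdiff] at hf
    obtain ⟨hfN, hfE⟩ := hf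
    rw [hE] at hfE
    simp only [Finset.mem_insert, Finset.mem_singleton, not_or] at hfE
    obtain ⟨h1, h2, h3, h4⟩ := hfE
    have hsf : Equiv.swap x y f = f := Equiv.swap_apply_of_ne_of_ne h1 h2
    have hρfx : ρ f ≠ x := by
      intro h
      have := hρ.invol f hfN
      rw [h] at this; exact h3 this.symm
    have hρfy : ρ f ≠ y := by
      intro h
      have := hρ.invol f hfN
      rw [h] at this; exact h4 this.symm
    rw [hρ'def]; simp only []
    rw [hsf, Equiv.swap_apply_of_ne_of_ne hρfx hρfy]
  -- cast and split
  have hnx : x ∉ ({y, ρ x, ρ y} : Finset ℕ) := by simp [hxy.ne, hxu, hxv]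
  have hny : y ∉ ({ρ x, ρ y} : Finset ℕ) := by simp [hyu, hyv]
  have hnu : ρ x ∉ ({ρ y} : Finset ℕ) := by simp [huv]
  push_cast
  rw [cast_numCrossings, cast_numCrossings]
  simp only [← Finset.sum_add_distrib]
  rw [show (nodes n) = N from rfl]
  have hB11 : ∑ a ∈ N \ E, ∑ b ∈ N \ E, (ind ρ' a b + ind ρ a b) = 0 := by
    refine Finset.sum_eq_zero fun a ha => Finset.sum_eq_zero fun b hb => ?_
    have e1 := hρ'f a ha
    have e2 := hρ'f b hb
    unfold ind
    rw [e1, e2]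
    exact zmod_two_add_self _
  have hmix : ∑ a ∈ N \ E, ∑ b ∈ E, (ind ρ' a b + ind ρ a b)
      + ∑ a ∈ E, ∑ b ∈ N \ E, (ind ρ' a b + ind ρ a b) = 0 := by
    rw [Finset.sum_comm (s := E) (t := N \ E), ← Finset.sum_add_distrib]
    refine Finset.sum_eq_zero fun f hf => ?_
    have hf' := hf
    rw [Finset.mem_sdiff] at hf'
    obtain ⟨hfN, hfE⟩ := hf'
    rw [hE] at hfE
    simp only [Finset.mem_insert, Finset.mem_singleton, not_or] at hfE
    obtain ⟨h1, h2, h3, h4⟩ := hfE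
    have hFx : ρ f ≠ x := by
      intro h; apply h3
      have hh := hρ.invol f hfN
      rw [h] at hh; exact hh.symm
    have hFy : ρ f ≠ y := by
      intro h; apply h4
      have hh := hρ.invol f hfN
      rw [h] at hh; exact hh.symm
    have hFu : ρ f ≠ ρ x := by
      intro h; apply h1
      have hh := hρ.invol f hfN
      rw [h, hρ.invol x hx] at hh; exact hh.symm
    have hFv : ρ f ≠ ρ y := by
      intro h; apply h2
      have hh := hρ.invol f hfN
      rw [h, hρ.invol y hy] at hh; exact hh.symm
    have hvf := hρ'f f hf
    rw [hE]
    simp only [Finset.sum_insert hnx, Finset.sum_insert hny, Finset.sum_insert hnu,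
      Finset.sum_singleton]
    unfold ind
    rw [hρ'x, hρ'y, hρ'u, hρ'v, hvf, hρ.invol x hx, hρ.invol y hy]
    linear_combination (mixedZero f (ρ f) x y (ρ x) (ρ y) hxy.ne hxu hxv hyu hyv huv
      h1 h2 h3 h4 hFx hFy hFu hFv)
  calc ∑ a ∈ N, ∑ b ∈ N, (ind ρ' a b + ind ρ a b)
      = ∑ a ∈ N, (∑ b ∈ N \ E, (ind ρ' a b + ind ρ a b) + ∑ b ∈ E, (ind ρ' a b + ind ρ a b)) :=
        Finset.sum_congr rfl fun a _ => (Finset.sum_sdiff hEN).symm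
    _ = (∑ a ∈ N \ E, (∑ b ∈ N \ E, (ind ρ' a b + ind ρ a b) + ∑ b ∈ E, (ind ρ' a b + ind ρ a b)))
        + ∑ a ∈ E, (∑ b ∈ N \ E, (ind ρ' a b + ind ρ a b) + ∑ b ∈ E, (ind ρ' a b + ind ρ a b)) :=
        (Finset.sum_sdiff hEN).symm
    _ = ((∑ a ∈ N \ E, ∑ b ∈ N \ E, (ind ρ' a b + ind ρ a b))
          + ∑ a ∈ N \ E, ∑ b ∈ E, (ind ρ' a b + ind ρ a b))
        + ((∑ a ∈ E, ∑ b ∈ N \ E, (ind ρ' a b + ind ρ a b))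
          + ∑ a ∈ E, ∑ b ∈ E, (ind ρ' a b + ind ρ a b)) := by
        rw [Finset.sum_add_distrib, Finset.sum_add_distrib]
    _ = ∑ a ∈ E, ∑ b ∈ E, (ind ρ' a b + ind ρ a b) := by
        linear_combination hB11 + hmix


/-- Lemma 2.1.28: parity change of the number of crossings under
swapping the locations of `x` and `y` when no two nodes strictly between `x` and `y`
are paired with each other. -/
theorem statement9 (n : ℕ) (ρ : ℕ → ℕ) (hρ : IsPairing n ρ)
    (x y : ℕ) (hx : x ∈ nodes n) (hy : y ∈ nodes n) (hxy : x < y) (hne : ρ x ≠ y)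
    (hmid : ∀ a, x < a → a < y → ¬ (x < ρ a ∧ ρ a < y)) :
    letI ρ' : ℕ → ℕ := fun a => Equiv.swap x y (ρ (Equiv.swap x y a))
    (((x < ρ x ∧ ρ x < y) ∧ (x < ρ y ∧ ρ y < y)) →
        Odd (numCrossings n ρ' + numCrossings n ρ)) ∧
    ((((x < ρ x ∧ ρ x < y) ∧ ¬ (x < ρ y ∧ ρ y < y)) ∨
        (¬ (x < ρ x ∧ ρ x < y) ∧ (x < ρ y ∧ ρ y < y))) →
        Even (numCrossings n ρ' + numCrossings n ρ)) ∧
    ((¬ (x < ρ x ∧ ρ x < y) ∧ ¬ (x < ρ y ∧ ρ y < y)) →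
        Odd (numCrossings n ρ' + numCrossings n ρ)) := by
  set ρ' : ℕ → ℕ := fun a => Equiv.swap x y (ρ (Equiv.swap x y a)) with hρ'def
  have hxu : x ≠ ρ x := Ne.symm (hρ.nofix x hx)
  have hyv : y ≠ ρ y := Ne.symm (hρ.nofix y hy)
  have hyu : y ≠ ρ x := Ne.symm hne
  have hxv : x ≠ ρ y := by
    intro h
    have := hρ.invol y hy
    rw [← h] at this
    exact hne (by omega)
  have huv : ρ x ≠ ρ y := by
    intro h
    have h1 := hρ.invol x hx
    have h2 := hρ.invol y hy
    rw [h] at h1; omega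
  have hswx : Equiv.swap x y x = y := Equiv.swap_apply_left x y
  have hswy : Equiv.swap x y y = x := Equiv.swap_apply_right x y
  have hswu : Equiv.swap x y (ρ x) = ρ x := Equiv.swap_apply_of_ne_of_ne hxu.symm hyu.symm
  have hswv : Equiv.swap x y (ρ y) = ρ y := Equiv.swap_apply_of_ne_of_ne hxv.symm hyv.symm
  have hρ'x : ρ' x = ρ y := by rw [hρ'def]; simp only []; rw [hswx, hswv]
  have hρ'y : ρ' y = ρ x := by rw [hρ'def]; simp only []; rw [hswy, hswu]
  have hρ'u : ρ' (ρ x) = y := by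
    rw [hρ'def]; simp only []; rw [hswu, hρ.invol x hx, hswx]
  have hρ'v : ρ' (ρ y) = x := by
    rw [hρ'def]; simp only []; rw [hswv, hρ.invol y hy, hswy]
  have hnx : x ∉ ({y, ρ x, ρ y} : Finset ℕ) := by simp [hxy.ne, hxu, hxv]
  have hny : y ∉ ({ρ x, ρ y} : Finset ℕ) := by simp [hyu, hyv]
  have hnu : ρ x ∉ ({ρ y} : Finset ℕ) := by simp [huv]
  have hnyx : ¬ y < x := by omega
  have hk := key n ρ hρ x y hx hy hxy hne
  rw [← hρ'def] at hk
  simp only [Finset.sum_insert hnx, Finset.sum_insert hny, Finset.sum_insert hnu,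
    Finset.sum_singleton] at hk
  unfold ind at hk
  rw [hρ'x, hρ'y, hρ'u, hρ'v, hρ.invol x hx, hρ.invol y hy] at hk
  simp only [lt_self_iff_false, false_and, and_false, if_false, add_zero, zero_add,
    hnyx, hxy, true_and, and_true] at hk
  have hfin : ∀ S : ZMod 2, ↑(numCrossings n ρ' + numCrossings n ρ) = S → S = 1 →
      Odd (numCrossings n ρ' + numCrossings n ρ) := by
    intro S h1 h2
    rw [← ZMod.natCast_eq_one_iff_odd, h1, h2]
  have hfin0 : ∀ S : ZMod 2, ↑(numCrossings n ρ' + numCrossings n ρ) = S → S = 0 →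
      Even (numCrossings n ρ' + numCrossings n ρ) := by
    intro S h1 h2
    rw [← ZMod.natCast_eq_zero_iff_even, h1, h2]
  refine ⟨?_, ?_, ?_⟩
  · rintro ⟨⟨c1, c2⟩, c3, c4⟩
    simp only [c1, c2, c3, c4, show ¬y < ρ y from by omega, show ¬y < ρ x from by omega,
      show ¬ρ y < x from by omega, show ¬ρ x < x from by omega,
      true_and, and_true, false_and, and_false, if_false, if_true, add_zero, zero_add] at hk
    refine hfin _ hk ?_
    split_ifs <;> first | decide | (exfalso; omega)
  · rintro (⟨⟨c1, c2⟩, nc⟩ | ⟨nc, c1, c2⟩)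
    · have hv : ρ y < x ∨ y < ρ y := by omega
      rcases hv with hv | hv
      · simp only [c1, c2, hv, show ¬y < ρ y from by omega, show ¬y < ρ x from by omega,
          show ¬x < ρ y from by omega, show ¬ρ x < x from by omega,
          show ¬ρ x < ρ y from by omega,
          true_and, and_true, false_and, and_false, if_false, if_true, add_zero, zero_add] at hk
        exact hfin0 _ hk (by first | decide | (split_ifs <;> first | decide | (exfalso; omega)))
      · simp only [c1, c2, hv, show ¬ρ y < y from by omega, show ¬y < ρ x from by omega,
          show ¬ρ y < ρ x from by omega, show ¬ρ x < x from by omega,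
          show ¬ρ y < x from by omega,
          true_and, and_true, false_and, and_false, if_false, if_true, add_zero, zero_add] at hk
        exact hfin0 _ hk (by first | decide | (split_ifs <;> first | decide | (exfalso; omega)))
    · have hu : ρ x < x ∨ y < ρ x := by omega
      rcases hu with hu | hu
      · simp only [c1, c2, hu, show ¬x < ρ x from by omega, show ¬y < ρ y from by omega,
          show ¬y < ρ x from by omega, show ¬ρ y < ρ x from by omega,
          show ¬ρ y < x from by omega,
          true_and, and_true, false_and, and_false, if_false, if_true, add_zero, zero_add] at hk
        exact hfin0 _ hk (by first | decide | (split_ifs <;> first | decide | (exfalso; omega)))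
      · simp only [c1, c2, hu, show ¬y < ρ y from by omega, show ¬ρ x < ρ y from by omega,
          show ¬ρ x < y from by omega, show ¬ρ y < x from by omega,
          show ¬ρ x < x from by omega,
          true_and, and_true, false_and, and_false, if_false, if_true, add_zero, zero_add] at hk
        exact hfin0 _ hk (by first | decide | (split_ifs <;> first | decide | (exfalso; omega)))
  · rintro ⟨nc1, nc2⟩
    have hu : ρ x < x ∨ y < ρ x := by omega
    have hv : ρ y < x ∨ y < ρ y := by omega
    rcases hu with hu | hu <;> rcases hv with hv | hv
    · simp only [hu, hv, show ¬x < ρ x from by omega, show ¬x < ρ y from by omega,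
        show ¬y < ρ y from by omega, show ¬y < ρ x from by omega, show ρ x < y from by omega,
        show ρ y < y from by omega,
        true_and, and_true, false_and, and_false, if_false, if_true, add_zero, zero_add] at hk
      refine hfin _ hk ?_
      split_ifs <;> first | decide | (exfalso; omega)
    · simp only [hu, hv, show ¬x < ρ x from by omega, show x < ρ y from by omega,
        show ¬ρ y < y from by omega, show ¬y < ρ x from by omega,
        show ¬ρ y < ρ x from by omega, show ¬ρ y < x from by omega,
        show ρ x < ρ y from by omega, show ρ x < x from by omega,
        true_and, and_true, false_and, and_false, if_false, if_true, add_zero, zero_add] at hk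
      exact hfin _ hk (by first | decide | (split_ifs <;> first | decide | (exfalso; omega)))
    · simp only [hu, hv, show x < ρ x from by omega, show ¬x < ρ y from by omega,
        show ¬ρ x < y from by omega, show ¬y < ρ y from by omega,
        show ¬ρ x < ρ y from by omega, show ¬ρ x < x from by omega,
        show ρ y < x from by omega, show y < ρ x from by omega,
        true_and, and_true, false_and, and_false, if_false, if_true, add_zero, zero_add] at hk
      exact hfin _ hk (by first | decide | (split_ifs <;> first | decide | (exfalso; omega)))
    · simp only [hu, hv, show x < ρ x from by omega, show x < ρ y from by omega,
        show ¬ρ x < y from by omega, show ¬ρ y < y from by omega,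
        show ¬ρ x < x from by omega, show ¬ρ y < x from by omega,
        true_and, and_true, false_and, and_false, if_false, if_true, add_zero, zero_add] at hk
      refine hfin _ hk ?_
      split_ifs <;> first | decide | (exfalso; omega)

end DD
end

section
/- Let π and ρ be pairings of N = {1,…,2n}, and suppose a < b < c < d are nodes with ρ(a) = c and ρ(b) = d. Let ρ₁ be the pairing agreeing with ρ outside {a,b,c,d} with ρ₁(a) = b and ρ₁(c) = d, and let ρ₂ be the pairing agreeing with ρ outside {a,b,c,d} with ρ₂(a) = d and ρ₂(b) = c. Writing C, C₁, C₂ for the numbers of components of π ∪ ρ, π ∪ ρ₁, π ∪ ρ₂ respectively, exactly one of the following holds: (1) C = C₁ + 1 and C = C₂ + 1; (2) C₁ = C + 1 and C₂ = C; (3) C₂ = C + 1 and C₁ = C. -/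
namespace DD

section Statement10Aux

/-- The residual step relation: all `π`-steps, and `ρ`-steps away from the special set. -/
def SRel (n : ℕ) (π ρ : ℕ → ℕ) (Sp : ℕ → Prop) (u v : ℕ) : Prop :=
  u ∈ nodes n ∧ (v = π u ∨ (v = ρ u ∧ ¬ Sp u))

/-- Connectivity by the residual steps. -/
def compS (n : ℕ) (π ρ : ℕ → ℕ) (Sp : ℕ → Prop) (x y : ℕ) : Prop :=
  Relation.ReflTransGen (SRel n π ρ Sp) x y

theorem SRel_symm {n : ℕ} {π ρ : ℕ → ℕ} {Sp : ℕ → Prop}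
    (hπ : IsPairing n π) (hρ : IsPairing n ρ)
    (hSpρ : ∀ z, Sp z → Sp (ρ z)) : Symmetric (SRel n π ρ Sp) := by
  rintro u v ⟨hu, h | ⟨h, hn⟩⟩
  · subst h; exact ⟨hπ.maps u hu, Or.inl (hπ.invol u hu).symm⟩
  · subst h
    refine ⟨hρ.maps u hu, Or.inr ⟨(hρ.invol u hu).symm, fun hs => hn ?_⟩⟩
    have := hSpρ _ hs
    rwa [hρ.invol u hu] at this

theorem compS_symm {n : ℕ} {π ρ : ℕ → ℕ} {Sp : ℕ → Prop}
    (hπ : IsPairing n π) (hρ : IsPairing n ρ)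
    (hSpρ : ∀ z, Sp z → Sp (ρ z)) : Symmetric (compS n π ρ Sp) :=
  fun x y h => (@Relation.ReflTransGen.stdSymm _ _ ⟨SRel_symm hπ hρ hSpρ⟩).symm x y h

/-- The alternating-step permutation on (node, direction) states. -/
def gPerm (n : ℕ) (π ρ : ℕ → ℕ) (hπ : IsPairing n π) (hρ : IsPairing n ρ) :
    Equiv.Perm ({m // m ∈ nodes n} × Bool) where
  toFun s := if s.2 then (⟨π s.1, hπ.maps _ s.1.2⟩, false) else (⟨ρ s.1, hρ.maps _ s.1.2⟩, true)
  invFun s := if s.2 then (⟨ρ s.1, hρ.maps _ s.1.2⟩, false) else (⟨π s.1, hπ.maps _ s.1.2⟩, true)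
  left_inv := by
    rintro ⟨z, (_ | _)⟩ <;>
      simp [Prod.ext_iff, Subtype.ext_iff, hπ.invol _ z.2, hρ.invol _ z.2]
  right_inv := by
    rintro ⟨z, (_ | _)⟩ <;>
      simp [Prod.ext_iff, Subtype.ext_iff, hπ.invol _ z.2, hρ.invol _ z.2]

theorem walk {n : ℕ} {π ρ : ℕ → ℕ} (hπ : IsPairing n π) (hρ : IsPairing n ρ)
    {Sp : ℕ → Prop} (hSpρ : ∀ z, Sp z → Sp (ρ z))
    {x : ℕ} (hx : Sp x) (hxn : x ∈ nodes n) :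
    ∃ y, Sp y ∧ y ≠ x ∧ compS n π ρ Sp x y ∧
      ∀ z, Sp z → compS n π ρ Sp x z → z = x ∨ z = y := by
  classical
  set g : Equiv.Perm ({m // m ∈ nodes n} × Bool) := gPerm n π ρ hπ hρ with hgdef
  have gT : ∀ z : {m // m ∈ nodes n}, g (z, true) = (⟨π z, hπ.maps _ z.2⟩, false) := fun _ => rfl
  have gF : ∀ z : {m // m ∈ nodes n}, g (z, false) = (⟨ρ z, hρ.maps _ z.2⟩, true) := fun _ => rfl
  have giT : ∀ z : {m // m ∈ nodes n}, g⁻¹ (z, true) = (⟨ρ z, hρ.maps _ z.2⟩, false) := fun _ => rfl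
  have giF : ∀ z : {m // m ∈ nodes n}, g⁻¹ (z, false) = (⟨π z, hπ.maps _ z.2⟩, true) := fun _ => rfl
  set s₀ : {m // m ∈ nodes n} × Bool := (⟨x, hxn⟩, true) with hs₀
  set P : ℕ → {m // m ∈ nodes n} × Bool := fun k => (g ^ k) s₀ with hP
  have hP0 : P 0 = s₀ := rfl
  have hstep : ∀ k, P (k + 1) = g (P k) := by
    intro k; show (g ^ (k + 1)) s₀ = g ((g ^ k) s₀)
    rw [pow_succ', Equiv.Perm.mul_apply]
  have hprev : ∀ k, g⁻¹ (P (k + 1)) = P k := by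
    intro k; rw [hstep]; exact g.symm_apply_apply (P k)
  have hpair : ∀ k, P k = ((P k).1, (P k).2) := fun _ => rfl
  set L := orderOf g with hL
  have hL0 : 0 < L := orderOf_pos g
  have hPL : P L = s₀ := by show (g ^ L) s₀ = s₀; rw [pow_orderOf_eq_one]; rfl
  have hP1snd : (P 1).2 = false := by
    have : P 1 = g s₀ := by rw [hstep 0, hP0]
    rw [this, hs₀, gT]
  have hL2 : 2 ≤ L := by
    by_contra h
    have hL1 : L = 1 := by omega
    have h1 : P 1 = s₀ := by rw [← hL1]; exact hPL
    rw [h1, hs₀] at hP1snd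
    simp at hP1snd
  have hQex : ∃ k, 1 ≤ k ∧ ((P k).2 = false ∧ Sp (P k).1.val) := by
    refine ⟨L - 1, by omega, ?_⟩
    have h1 : P (L - 1) = g⁻¹ (P L) := by
      rw [← hprev (L - 1)]; congr 2; omega
    rw [h1, hPL, hs₀, giT]
    exact ⟨rfl, hSpρ x hx⟩
  set t := Nat.find hQex with htdef
  obtain ⟨ht1, htf, htSp⟩ := Nat.find_spec hQex
  have htmin : ∀ k, k < t → ¬(1 ≤ k ∧ ((P k).2 = false ∧ Sp (P k).1.val)) :=
    fun k hk => Nat.find_min hQex hk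
  -- All positions up to t are S-connected to x.
  have claimA : ∀ k, k ≤ t → compS n π ρ Sp x (P k).1.val := by
    intro k
    induction k with
    | zero => intro _; exact Relation.ReflTransGen.refl
    | succ k ih =>
      intro hk
      have base := ih (by omega)
      cases hd : (P k).2 with
      | true =>
        have hPk : P k = ((P k).1, true) := by rw [hpair k, hd]
        have hnext : P (k + 1) = (⟨π (P k).1, hπ.maps _ (P k).1.2⟩, false) := by
          rw [hstep k, hPk, gT]
        have : SRel n π ρ Sp (P k).1.val (P (k + 1)).1.val := by
          rw [hnext]; exact ⟨(P k).1.2, Or.inl rfl⟩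
        exact base.tail this
      | false =>
        have hk1 : 1 ≤ k := by
          rcases Nat.eq_zero_or_pos k with rfl | h
          · rw [hP0, hs₀] at hd; simp at hd
          · omega
        have hnsp : ¬ Sp (P k).1.val := by
          intro hsp
          exact htmin k (by omega) ⟨hk1, hd, hsp⟩
        have hPk : P k = ((P k).1, false) := by rw [hpair k, hd]
        have hnext : P (k + 1) = (⟨ρ (P k).1, hρ.maps _ (P k).1.2⟩, true) := by
          rw [hstep k, hPk, gF]
        have : SRel n π ρ Sp (P k).1.val (P (k + 1)).1.val := by
          rw [hnext]; exact ⟨(P k).1.2, Or.inr ⟨rfl, hnsp⟩⟩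
        exact base.tail this
  -- Everything S-connected to x is a position on the walk.
  have claimU : ∀ z, compS n π ρ Sp x z → ∃ k, k ≤ t ∧ (P k).1.val = z := by
    intro z hz
    induction hz with
    | refl => exact ⟨0, by omega, rfl⟩
    | @tail p q hxp hpq ih =>
      obtain ⟨k, hk, hkz⟩ := ih
      obtain ⟨hpmem, hsc⟩ := hpq
      rcases hsc with hqπ | ⟨hqρ, hnsp⟩
      · cases hd : (P k).2 with
        | true =>
          have hkt : k < t := by
            rcases eq_or_lt_of_le hk with rfl | h
            · rw [htf] at hd; exact absurd hd (by simp)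
            · exact h
          refine ⟨k + 1, by omega, ?_⟩
          have hPk : P k = ((P k).1, true) := by rw [hpair k, hd]
          rw [hstep k, hPk, gT]
          show π (P k).1.val = q
          rw [hqπ, hkz]
        | false =>
          have hk1 : 1 ≤ k := by
            rcases Nat.eq_zero_or_pos k with rfl | h
            · rw [hP0, hs₀] at hd; simp at hd
            · omega
          refine ⟨k - 1, by omega, ?_⟩
          have hPk : P k = ((P k).1, false) := by rw [hpair k, hd]
          have hk' : k - 1 + 1 = k := by omega
          have : P (k - 1) = g⁻¹ (P k) := by rw [← hprev (k - 1), hk']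
          rw [this, hPk, giF]
          show π (P k).1.val = q
          rw [hqπ, hkz]
      · cases hd : (P k).2 with
        | true =>
          have hk1 : 1 ≤ k := by
            rcases Nat.eq_zero_or_pos k with rfl | h
            · exfalso; apply hnsp
              have : (P 0).1.val = x := rfl
              rw [this] at hkz; rwa [← hkz]
            · omega
          refine ⟨k - 1, by omega, ?_⟩
          have hPk : P k = ((P k).1, true) := by rw [hpair k, hd]
          have hk' : k - 1 + 1 = k := by omega
          have : P (k - 1) = g⁻¹ (P k) := by rw [← hprev (k - 1), hk']
          rw [this, hPk, giT]
          show ρ (P k).1.val = q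
          rw [hqρ, hkz]
        | false =>
          have hkt : k < t := by
            rcases eq_or_lt_of_le hk with rfl | h
            · exact absurd (hkz ▸ htSp) hnsp
            · exact h
          refine ⟨k + 1, by omega, ?_⟩
          have hPk : P k = ((P k).1, false) := by rw [hpair k, hd]
          rw [hstep k, hPk, gF]
          show ρ (P k).1.val = q
          rw [hqρ, hkz]
  set y := (P t).1.val with hy
  have hyne : y ≠ x := by
    intro hyx
    -- reversal machinery
    set r : {m // m ∈ nodes n} × Bool → {m // m ∈ nodes n} × Bool :=
      fun s => (s.1, !s.2) with hr
    have hrg : ∀ s, r (g s) = g⁻¹ (r s) := by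
      rintro ⟨z, (_ | _)⟩ <;> rfl
    have hrpow : ∀ k s, r ((g ^ k) s) = ((g ^ k)⁻¹) (r s) := by
      intro k
      induction k with
      | zero => intro s; simp
      | succ k ih =>
        intro s
        have h1 : (g ^ (k + 1)) s = g ((g ^ k) s) := by
          rw [pow_succ', Equiv.Perm.mul_apply]
        rw [h1, hrg, ih]
        have h2 : (g ^ (k + 1))⁻¹ = g⁻¹ * (g ^ k)⁻¹ := by
          rw [pow_succ, mul_inv_rev]
        rw [h2, Equiv.Perm.mul_apply]
    have hrs : r s₀ = P t := by
      have h1 : (P t).1 = (⟨x, hxn⟩ : {m // m ∈ nodes n}) := Subtype.ext hyx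
      have h2 : P t = ((P t).1, false) := by rw [hpair t, htf]
      rw [h2, h1]; rfl
    have hinv : ∀ k, k ≤ t → r (P k) = P (t - k) := by
      intro k hk
      have e1 : r (P k) = ((g ^ k)⁻¹) (r s₀) := hrpow k s₀
      rw [hrs] at e1
      have e2 : ((g ^ k)⁻¹) (P t) = P (t - k) := by
        show ((g ^ k)⁻¹) ((g ^ t) s₀) = (g ^ (t - k)) s₀
        have : g ^ k * g ^ (t - k) = g ^ t := by rw [← pow_add]; congr 1; omega
        rw [← this, ← Equiv.Perm.mul_apply, inv_mul_cancel_left]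
      rw [e1, e2]
    rcases Nat.even_or_odd t with ⟨k, hk⟩ | ⟨k, hk⟩
    · have hkt : k ≤ t := by omega
      have : r (P k) = P k := by
        rw [hinv k hkt]; congr 1; omega
      have := congrArg Prod.snd this
      simp [hr] at this
    · have hkt : k ≤ t := by omega
      have h1 : r (P k) = P (k + 1) := by
        rw [hinv k hkt]; congr 1; omega
      rw [hstep k] at h1
      cases hd : (P k).2 with
      | true =>
        have hPk : P k = ((P k).1, true) := by rw [hpair k, hd]
        rw [hPk, gT] at h1
        have := congrArg (fun s => s.1.val) h1
        simp [hr] at this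
        exact hπ.nofix (P k).1.val (P k).1.2 this.symm
      | false =>
        have hPk : P k = ((P k).1, false) := by rw [hpair k, hd]
        rw [hPk, gF] at h1
        have := congrArg (fun s => s.1.val) h1
        simp [hr] at this
        exact hρ.nofix (P k).1.val (P k).1.2 this.symm
  refine ⟨y, htSp, hyne, claimA t le_rfl, ?_⟩
  intro z hzSp hzcomp
  obtain ⟨k, hk, hkz⟩ := claimU z hzcomp
  cases hd : (P k).2 with
  | false =>
    have hk1 : 1 ≤ k := by
      rcases Nat.eq_zero_or_pos k with rfl | h
      · rw [hP0, hs₀] at hd; simp at hd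
      · omega
    have hkt : k = t := by
      by_contra hne
      exact htmin k (by omega) ⟨hk1, hd, hkz ▸ hzSp⟩
    right; rw [← hkz, hkt]
  | true =>
    rcases Nat.eq_zero_or_pos k with rfl | hk1
    · left; rw [← hkz]; rfl
    · exfalso
      have hPk : P k = ((P k).1, true) := by rw [hpair k, hd]
      have hk' : k - 1 + 1 = k := by omega
      have hprev' : P (k - 1) = g⁻¹ (P k) := by rw [← hprev (k - 1), hk']
      rw [hPk, giT] at hprev'
      have hsnd : (P (k - 1)).2 = false := by rw [hprev']
      have hsp' : Sp (P (k - 1)).1.val := by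
        rw [hprev']
        exact hSpρ _ (hkz ▸ hzSp)
      have hk1' : 1 ≤ k - 1 := by
        rcases Nat.eq_zero_or_pos (k - 1) with h0 | h
        · exfalso
          rw [h0, hP0, hs₀] at hsnd; simp at hsnd
        · omega
      have hkt : k < t := by
        rcases eq_or_lt_of_le hk with rfl | h
        · rw [htf] at hd; exact absurd hd (by simp)
        · exact h
      exact htmin (k - 1) (by omega) ⟨hk1', hsnd, hsp'⟩

theorem closure_sub {S X : ℕ → ℕ → Prop}
    (hX : ∀ u v, X u v → Relation.ReflTransGen S u v) (x y : ℕ) :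
    Relation.ReflTransGen (fun p q => S p q ∨ X p q) x y ↔ Relation.ReflTransGen S x y := by
  constructor
  · intro h
    induction h with
    | refl => exact Relation.ReflTransGen.refl
    | @tail p q hxp hpq ih =>
      rcases hpq with h | h
      · exact ih.tail h
      · exact ih.trans (hX _ _ h)
  · intro h
    exact Relation.ReflTransGen.mono (fun p q h' => Or.inl h') _ _ h

theorem closure_merge {S X : ℕ → ℕ → Prop} {u v : ℕ}
    (hsymm : Symmetric (Relation.ReflTransGen S))
    (huv : ¬ Relation.ReflTransGen S u v)
    (hXsym : ∀ p q, X p q → X q p)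
    (hXuv : X u v)
    (hX : ∀ p q, X p q →
      (Relation.ReflTransGen S p u ∧ Relation.ReflTransGen S v q) ∨
      (Relation.ReflTransGen S p v ∧ Relation.ReflTransGen S u q))
    (x y : ℕ) :
    Relation.ReflTransGen (fun p q => S p q ∨ X p q) x y ↔
      (Relation.ReflTransGen S x y ∨
        (Relation.ReflTransGen S x u ∧ Relation.ReflTransGen S v y) ∨
        (Relation.ReflTransGen S x v ∧ Relation.ReflTransGen S u y)) := by
  constructor
  · intro h
    induction h with
    | refl => exact Or.inl Relation.ReflTransGen.refl
    | @tail p q hxp hpq ih =>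
      rcases hpq with hS | hXpq
      · rcases ih with h | ⟨h1, h2⟩ | ⟨h1, h2⟩
        · exact Or.inl (h.tail hS)
        · exact Or.inr (Or.inl ⟨h1, h2.tail hS⟩)
        · exact Or.inr (Or.inr ⟨h1, h2.tail hS⟩)
      · rcases hX p q hXpq with ⟨hpu, hvq⟩ | ⟨hpv, huq⟩
        · rcases ih with h | ⟨h1, h2⟩ | ⟨h1, h2⟩
          · exact Or.inr (Or.inl ⟨h.trans hpu, hvq⟩)
          · exact absurd (hsymm (h2.trans hpu)) huv
          · exact Or.inl (h1.trans hvq)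
        · rcases ih with h | ⟨h1, h2⟩ | ⟨h1, h2⟩
          · exact Or.inr (Or.inr ⟨h.trans hpv, huq⟩)
          · exact Or.inl (h1.trans huq)
          · exact absurd (h2.trans hpv) huv
  · rintro (h | ⟨h1, h2⟩ | ⟨h1, h2⟩)
    · exact Relation.ReflTransGen.mono (fun p q => Or.inl) _ _ h
    · exact ((Relation.ReflTransGen.mono (fun p q => Or.inl) _ _ h1).tail (Or.inr hXuv)).trans (Relation.ReflTransGen.mono (fun p q => Or.inl) _ _ h2)
    · exact ((Relation.ReflTransGen.mono (fun p q => Or.inl) _ _ h1).tail (Or.inr (hXsym u v hXuv))).trans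
        (Relation.ReflTransGen.mono (fun p q => Or.inl) _ _ h2)

open scoped Classical in
/-- The class of `x` under a relation `E`. -/
noncomputable def cls (n : ℕ) (E : ℕ → ℕ → Prop) (x : ℕ) : Finset ℕ :=
  (nodes n).filter (fun y => E x y)

/-- Number of classes of a relation on the nodes. -/
noncomputable def ncl (n : ℕ) (E : ℕ → ℕ → Prop) : ℕ :=
  ((nodes n).image (cls n E)).card

open scoped Classical in
theorem mem_cls {n : ℕ} {E : ℕ → ℕ → Prop} {x z : ℕ} :
    z ∈ cls n E x ↔ (z ∈ nodes n ∧ E x z) := by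
  unfold cls; exact Finset.mem_filter

theorem ncl_congr {n : ℕ} {E E' : ℕ → ℕ → Prop} (h : ∀ x y, E x y ↔ E' x y) :
    ncl n E = ncl n E' := by
  have : E = E' := funext fun x => funext fun y => propext (h x y)
  rw [this]

open scoped Classical in
theorem ncl_merge {n : ℕ} {E : ℕ → ℕ → Prop} {u v : ℕ}
    (hrefl : ∀ x, E x x) (hsym : ∀ {x y}, E x y → E y x)
    (htrans : ∀ {x y z}, E x y → E y z → E x z)
    (hu : u ∈ nodes n) (hv : v ∈ nodes n) (huv : ¬ E u v) :
    ncl n (fun x y => E x y ∨ (E x u ∧ E v y) ∨ (E x v ∧ E u y)) + 1 = ncl n E := by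
  set F : ℕ → ℕ → Prop := fun x y => E x y ∨ (E x u ∧ E v y) ∨ (E x v ∧ E u y) with hF
  have hFrefl : ∀ x, F x x := fun x => Or.inl (hrefl x)
  have hFu : ∀ x y, E x u → (F x y ↔ F u y) := by
    intro x y hxu
    constructor
    · rintro (h | ⟨h1, h2⟩ | ⟨h1, h2⟩)
      · exact Or.inl (htrans (hsym hxu) h)
      · exact Or.inr (Or.inl ⟨hrefl u, h2⟩)
      · exact Or.inl h2
    · rintro (h | ⟨h1, h2⟩ | ⟨h1, h2⟩)
      · exact Or.inl (htrans hxu h)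
      · exact Or.inr (Or.inl ⟨hxu, h2⟩)
      · exact absurd h1 huv
  have hFv : ∀ x y, E x v → (F x y ↔ F u y) := by
    intro x y hxv
    constructor
    · rintro (h | ⟨h1, h2⟩ | ⟨h1, h2⟩)
      · exact Or.inr (Or.inl ⟨hrefl u, htrans (hsym hxv) h⟩)
      · exact absurd (htrans (hsym h1) hxv) huv
      · exact Or.inl h2
    · rintro (h | ⟨h1, h2⟩ | ⟨h1, h2⟩)
      · exact Or.inr (Or.inr ⟨hxv, h⟩)
      · exact Or.inl (htrans hxv h2)
      · exact absurd h1 huv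
  set clE : ℕ → Finset ℕ := cls n E with hclE
  set clF : ℕ → Finset ℕ := cls n F with hclF
  have hclE_congr : ∀ x z, E x z → clE x = clE z := by
    intro x z h
    rw [hclE]; unfold cls
    apply Finset.filter_congr
    intro y _
    exact ⟨fun h' => htrans (hsym h) h', fun h' => htrans h h'⟩
  have hclFu : ∀ x, E x u ∨ E x v → clF x = clF u := by
    intro x hx
    rw [hclF]; unfold cls
    refine @Finset.filter_congr _ _ _ (fun _ => Classical.propDecidable _)
      (fun _ => Classical.propDecidable _) _ fun y _ => ?_
    rcases hx with h | h
    · exact hFu x y h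
    · exact hFv x y h
  have hclFE : ∀ x, ¬ E x u → ¬ E x v → clF x = clE x := by
    intro x h1 h2
    rw [hclF, hclE]; unfold cls
    refine @Finset.filter_congr _ _ _ (fun _ => Classical.propDecidable _)
      (fun _ => Classical.propDecidable _) _ fun y _ => ?_
    constructor
    · rintro (h | ⟨hh, -⟩ | ⟨hh, -⟩)
      exacts [h, absurd hh h1, absurd hh h2]
    · exact Or.inl
  set A : Finset ℕ := (nodes n).filter (fun x => E x u ∨ E x v) with hA
  set B : Finset ℕ := (nodes n).filter (fun x => ¬(E x u ∨ E x v)) with hB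
  have hunion : A ∪ B = nodes n := Finset.filter_union_filter_not_eq _ _
  have huA : u ∈ A := by
    rw [hA, Finset.mem_filter]; exact ⟨hu, Or.inl (hrefl u)⟩
  have hvA : v ∈ A := by
    rw [hA, Finset.mem_filter]; exact ⟨hv, Or.inr (hrefl v)⟩
  have himgFA : A.image clF = {clF u} := by
    apply Finset.Subset.antisymm
    · intro T hT
      rw [Finset.mem_image] at hT
      obtain ⟨z, hzA, rfl⟩ := hT
      rw [hA, Finset.mem_filter] at hzA
      rw [Finset.mem_singleton]
      exact hclFu z hzA.2
    · intro T hT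
      rw [Finset.mem_singleton] at hT
      subst hT
      exact Finset.mem_image_of_mem clF huA
  have himgEA : A.image clE = {clE u, clE v} := by
    apply Finset.Subset.antisymm
    · intro T hT
      rw [Finset.mem_image] at hT
      obtain ⟨z, hzA, rfl⟩ := hT
      rw [hA, Finset.mem_filter] at hzA
      rcases hzA.2 with h | h
      · rw [Finset.mem_insert]; exact Or.inl (hclE_congr z u h)
      · rw [Finset.mem_insert, Finset.mem_singleton]; exact Or.inr (hclE_congr z v h)
    · intro T hT
      rcases Finset.mem_insert.mp hT with rfl | hT
      · exact Finset.mem_image_of_mem clE huA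
      · rw [Finset.mem_singleton] at hT; subst hT
        exact Finset.mem_image_of_mem clE hvA
  have himgB : B.image clF = B.image clE := by
    apply Finset.image_congr
    intro z hz
    have hz' : z ∈ B := hz
    rw [hB, Finset.mem_filter] at hz'
    push_neg at hz'
    exact hclFE z hz'.2.1 hz'.2.2
  have humemE : u ∈ clE u := by rw [hclE, mem_cls]; exact ⟨hu, hrefl u⟩
  have hvmemE : v ∈ clE v := by rw [hclE, mem_cls]; exact ⟨hv, hrefl v⟩
  have humemF : u ∈ clF u := by rw [hclF, mem_cls]; exact ⟨hu, hFrefl u⟩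
  have hBnotE : ∀ z ∈ B, clE z ≠ clE u ∧ clE z ≠ clE v ∧ clE z ≠ clF u := by
    intro z hz
    rw [hB, Finset.mem_filter] at hz
    push_neg at hz
    refine ⟨?_, ?_, ?_⟩
    · intro h
      apply hz.2.1
      have : u ∈ clE z := h ▸ humemE
      rw [hclE, mem_cls] at this
      exact this.2
    · intro h
      apply hz.2.2
      have : v ∈ clE z := h ▸ hvmemE
      rw [hclE, mem_cls] at this
      exact this.2
    · intro h
      apply hz.2.1
      have : u ∈ clE z := h ▸ humemF
      rw [hclE, mem_cls] at this
      exact this.2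
  have hclEuv : clE u ≠ clE v := by
    intro h
    apply huv
    have : v ∈ clE u := h ▸ hvmemE
    rw [hclE, mem_cls] at this
    exact this.2
  have hcF : ncl n F = (B.image clE).card + 1 := by
    have h0 : ncl n F = ((nodes n).image clF).card := by unfold ncl; rw [hclF]
    rw [h0, ← hunion, Finset.image_union, himgFA, himgB]
    rw [Finset.card_union_of_disjoint, Finset.card_singleton]
    · omega
    · rw [Finset.disjoint_left]
      intro T hT hT'
      rw [Finset.mem_singleton] at hT
      subst hT
      rw [Finset.mem_image] at hT'
      obtain ⟨z, hz, hz'⟩ := hT'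
      exact (hBnotE z hz).2.2 hz'
  have hcE : ncl n E = (B.image clE).card + 2 := by
    have h0 : ncl n E = ((nodes n).image clE).card := by unfold ncl; rw [hclE]
    rw [h0, ← hunion, Finset.image_union, himgEA]
    rw [Finset.card_union_of_disjoint]
    · rw [Finset.card_insert_of_notMem (by rwa [Finset.mem_singleton]), Finset.card_singleton]
      omega
    · rw [Finset.disjoint_left]
      intro T hT hT'
      rw [Finset.mem_image] at hT'
      obtain ⟨z, hz, hz'⟩ := hT'
      rcases Finset.mem_insert.mp hT with rfl | hT
      · exact (hBnotE z hz).1 hz'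
      · rw [Finset.mem_singleton] at hT; subst hT
        exact (hBnotE z hz).2.1 hz'
  rw [hcF, hcE]



end Statement10Aux

/-- Lemma 2.5.3: uncrossing a crossing `(a,c)`, `(b,d)` of `ρ` in the
two possible ways changes the number of components of `π ∪ ρ` in exactly one of three
mutually exclusive manners. -/
theorem statement10 (n : ℕ) (π ρ : ℕ → ℕ)
    (hπ : IsPairing n π) (hρ : IsPairing n ρ)
    (a b c d : ℕ) (ha : a ∈ nodes n) (hb : b ∈ nodes n)
    (hc : c ∈ nodes n) (hd : d ∈ nodes n)
    (hab : a < b) (hbc : b < c) (hcd : c < d)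
    (hρa : ρ a = c) (hρb : ρ b = d) :
    letI ρ₁ : ℕ → ℕ := fun i =>
      if i = a then b else if i = b then a
      else if i = c then d else if i = d then c else ρ i
    letI ρ₂ : ℕ → ℕ := fun i =>
      if i = a then d else if i = d then a
      else if i = b then c else if i = c then b else ρ i
    (numComponents n π ρ = numComponents n π ρ₁ + 1 ∧
        numComponents n π ρ = numComponents n π ρ₂ + 1) ∨
    (numComponents n π ρ₁ = numComponents n π ρ + 1 ∧
        numComponents n π ρ₂ = numComponents n π ρ) ∨
    (numComponents n π ρ₂ = numComponents n π ρ + 1 ∧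
        numComponents n π ρ₁ = numComponents n π ρ) := by
  set ρ₁ : ℕ → ℕ := fun i =>
      if i = a then b else if i = b then a
      else if i = c then d else if i = d then c else ρ i with hρ₁def
  set ρ₂ : ℕ → ℕ := fun i =>
      if i = a then d else if i = d then a
      else if i = b then c else if i = c then b else ρ i with hρ₂def
  -- basic facts
  have hρc : ρ c = a := by rw [← hρa]; exact hρ.invol a ha
  have hρd : ρ d = b := by rw [← hρb]; exact hρ.invol b hb
  have nba : b ≠ a := by omega
  have nab : a ≠ b := by omega
  have nac : a ≠ c := by omega
  have nad : a ≠ d := by omega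
  have nbc : b ≠ c := by omega
  have nbd : b ≠ d := by omega
  have ncd : c ≠ d := by omega
  have nca : c ≠ a := by omega
  have ncb : c ≠ b := by omega
  have nda : d ≠ a := by omega
  have ndb : d ≠ b := by omega
  have ndc : d ≠ c := by omega
  set Sp : ℕ → Prop := fun z => z = a ∨ z = b ∨ z = c ∨ z = d with hSpdef
  have hSpa : Sp a := Or.inl rfl
  have hSpb : Sp b := Or.inr (Or.inl rfl)
  have hSpc : Sp c := Or.inr (Or.inr (Or.inl rfl))
  have hSpd : Sp d := Or.inr (Or.inr (Or.inr rfl))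
  have hSpρ : ∀ z, Sp z → Sp (ρ z) := by
    rintro z (rfl | rfl | rfl | rfl)
    · rw [hρa]; exact hSpc
    · rw [hρb]; exact hSpd
    · rw [hρc]; exact hSpa
    · rw [hρd]; exact hSpb
  set E : ℕ → ℕ → Prop := compS n π ρ Sp with hEdef
  have hErefl : ∀ p, E p p := fun _ => Relation.ReflTransGen.refl
  have hEsym : ∀ {p q}, E p q → E q p := fun h => compS_symm hπ hρ hSpρ h
  have hEtrans : ∀ {p q r}, E p q → E q r → E p r := fun h h' =>
    Relation.ReflTransGen.trans h h'
  -- evaluation of ρ₁ and ρ₂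
  have eρ₁a : ρ₁ a = b := by rw [hρ₁def]; simp
  have eρ₁b : ρ₁ b = a := by rw [hρ₁def]; simp [nba, nbc, nbd]
  have eρ₁c : ρ₁ c = d := by rw [hρ₁def]; simp [nca, ncb, ncd]
  have eρ₁d : ρ₁ d = c := by rw [hρ₁def]; simp [nda, ndb, ndc]
  have eρ₂a : ρ₂ a = d := by rw [hρ₂def]; simp
  have eρ₂b : ρ₂ b = c := by rw [hρ₂def]; simp [nba, nbd]
  have eρ₂c : ρ₂ c = b := by rw [hρ₂def]; simp [nca, ncb, ncd]
  have eρ₂d : ρ₂ d = a := by rw [hρ₂def]; simp [nda]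
  have eρ₁n : ∀ p, ¬ Sp p → ρ₁ p = ρ p := by
    intro p hp
    simp only [hSpdef] at hp; push_neg at hp
    rw [hρ₁def]; simp [hp.1, hp.2.1, hp.2.2.1, hp.2.2.2]
  have eρ₂n : ∀ p, ¬ Sp p → ρ₂ p = ρ p := by
    intro p hp
    simp only [hSpdef] at hp; push_neg at hp
    rw [hρ₂def]; simp [hp.1, hp.2.1, hp.2.2.1, hp.2.2.2]
  -- step characterizations
  set Xρ : ℕ → ℕ → Prop := fun p q =>
    (p = a ∧ q = c) ∨ (p = c ∧ q = a) ∨ (p = b ∧ q = d) ∨ (p = d ∧ q = b) with hXρdef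
  set X₁ : ℕ → ℕ → Prop := fun p q =>
    (p = a ∧ q = b) ∨ (p = b ∧ q = a) ∨ (p = c ∧ q = d) ∨ (p = d ∧ q = c) with hX₁def
  set X₂ : ℕ → ℕ → Prop := fun p q =>
    (p = a ∧ q = d) ∨ (p = d ∧ q = a) ∨ (p = b ∧ q = c) ∨ (p = c ∧ q = b) with hX₂def
  have hXρsym : ∀ p q, Xρ p q → Xρ q p := by
    rintro p q (⟨rfl, rfl⟩ | ⟨rfl, rfl⟩ | ⟨rfl, rfl⟩ | ⟨rfl, rfl⟩)
    · exact Or.inr (Or.inl ⟨rfl, rfl⟩)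
    · exact Or.inl ⟨rfl, rfl⟩
    · exact Or.inr (Or.inr (Or.inr ⟨rfl, rfl⟩))
    · exact Or.inr (Or.inr (Or.inl ⟨rfl, rfl⟩))
  have hX₁sym : ∀ p q, X₁ p q → X₁ q p := by
    rintro p q (⟨rfl, rfl⟩ | ⟨rfl, rfl⟩ | ⟨rfl, rfl⟩ | ⟨rfl, rfl⟩)
    · exact Or.inr (Or.inl ⟨rfl, rfl⟩)
    · exact Or.inl ⟨rfl, rfl⟩
    · exact Or.inr (Or.inr (Or.inr ⟨rfl, rfl⟩))
    · exact Or.inr (Or.inr (Or.inl ⟨rfl, rfl⟩))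
  have hX₂sym : ∀ p q, X₂ p q → X₂ q p := by
    rintro p q (⟨rfl, rfl⟩ | ⟨rfl, rfl⟩ | ⟨rfl, rfl⟩ | ⟨rfl, rfl⟩)
    · exact Or.inr (Or.inl ⟨rfl, rfl⟩)
    · exact Or.inl ⟨rfl, rfl⟩
    · exact Or.inr (Or.inr (Or.inr ⟨rfl, rfl⟩))
    · exact Or.inr (Or.inr (Or.inl ⟨rfl, rfl⟩))
  have charρ : ∀ p q, (p ∈ nodes n ∧ (q = π p ∨ q = ρ p)) ↔
      (SRel n π ρ Sp p q ∨ Xρ p q) := by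
    intro p q
    constructor
    · rintro ⟨hp, hq | hq⟩
      · exact Or.inl ⟨hp, Or.inl hq⟩
      · by_cases hs : Sp p
        · rcases (show p = a ∨ p = b ∨ p = c ∨ p = d from hs) with rfl | rfl | rfl | rfl
          · exact Or.inr (Or.inl ⟨rfl, by rw [hq, hρa]⟩)
          · exact Or.inr (Or.inr (Or.inr (Or.inl ⟨rfl, by rw [hq, hρb]⟩)))
          · exact Or.inr (Or.inr (Or.inl ⟨rfl, by rw [hq, hρc]⟩))
          · exact Or.inr (Or.inr (Or.inr (Or.inr ⟨rfl, by rw [hq, hρd]⟩)))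
        · exact Or.inl ⟨hp, Or.inr ⟨hq, hs⟩⟩
    · rintro (⟨hp, hq | ⟨hq, -⟩⟩ | ⟨rfl, rfl⟩ | ⟨rfl, rfl⟩ | ⟨rfl, rfl⟩ | ⟨rfl, rfl⟩)
      · exact ⟨hp, Or.inl hq⟩
      · exact ⟨hp, Or.inr hq⟩
      · exact ⟨ha, Or.inr hρa.symm⟩
      · exact ⟨hc, Or.inr hρc.symm⟩
      · exact ⟨hb, Or.inr hρb.symm⟩
      · exact ⟨hd, Or.inr hρd.symm⟩
  have charρ₁ : ∀ p q, (p ∈ nodes n ∧ (q = π p ∨ q = ρ₁ p)) ↔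
      (SRel n π ρ Sp p q ∨ X₁ p q) := by
    intro p q
    constructor
    · rintro ⟨hp, hq | hq⟩
      · exact Or.inl ⟨hp, Or.inl hq⟩
      · by_cases hs : Sp p
        · rcases (show p = a ∨ p = b ∨ p = c ∨ p = d from hs) with rfl | rfl | rfl | rfl
          · exact Or.inr (Or.inl ⟨rfl, by rw [hq, eρ₁a]⟩)
          · exact Or.inr (Or.inr (Or.inl ⟨rfl, by rw [hq, eρ₁b]⟩))
          · exact Or.inr (Or.inr (Or.inr (Or.inl ⟨rfl, by rw [hq, eρ₁c]⟩)))
          · exact Or.inr (Or.inr (Or.inr (Or.inr ⟨rfl, by rw [hq, eρ₁d]⟩)))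
        · exact Or.inl ⟨hp, Or.inr ⟨by rw [hq, eρ₁n p hs], hs⟩⟩
    · rintro (⟨hp, hq | ⟨hq, hs⟩⟩ | ⟨rfl, rfl⟩ | ⟨rfl, rfl⟩ | ⟨rfl, rfl⟩ | ⟨rfl, rfl⟩)
      · exact ⟨hp, Or.inl hq⟩
      · exact ⟨hp, Or.inr (by rw [hq, eρ₁n p hs])⟩
      · exact ⟨ha, Or.inr eρ₁a.symm⟩
      · exact ⟨hb, Or.inr eρ₁b.symm⟩
      · exact ⟨hc, Or.inr eρ₁c.symm⟩
      · exact ⟨hd, Or.inr eρ₁d.symm⟩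
  have charρ₂ : ∀ p q, (p ∈ nodes n ∧ (q = π p ∨ q = ρ₂ p)) ↔
      (SRel n π ρ Sp p q ∨ X₂ p q) := by
    intro p q
    constructor
    · rintro ⟨hp, hq | hq⟩
      · exact Or.inl ⟨hp, Or.inl hq⟩
      · by_cases hs : Sp p
        · rcases (show p = a ∨ p = b ∨ p = c ∨ p = d from hs) with rfl | rfl | rfl | rfl
          · exact Or.inr (Or.inl ⟨rfl, by rw [hq, eρ₂a]⟩)
          · exact Or.inr (Or.inr (Or.inr (Or.inl ⟨rfl, by rw [hq, eρ₂b]⟩)))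
          · exact Or.inr (Or.inr (Or.inr (Or.inr ⟨rfl, by rw [hq, eρ₂c]⟩)))
          · exact Or.inr (Or.inr (Or.inl ⟨rfl, by rw [hq, eρ₂d]⟩))
        · exact Or.inl ⟨hp, Or.inr ⟨by rw [hq, eρ₂n p hs], hs⟩⟩
    · rintro (⟨hp, hq | ⟨hq, hs⟩⟩ | ⟨rfl, rfl⟩ | ⟨rfl, rfl⟩ | ⟨rfl, rfl⟩ | ⟨rfl, rfl⟩)
      · exact ⟨hp, Or.inl hq⟩
      · exact ⟨hp, Or.inr (by rw [hq, eρ₂n p hs])⟩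
      · exact ⟨ha, Or.inr eρ₂a.symm⟩
      · exact ⟨hd, Or.inr eρ₂d.symm⟩
      · exact ⟨hb, Or.inr eρ₂b.symm⟩
      · exact ⟨hc, Or.inr eρ₂c.symm⟩
  -- counting helpers
  have count_eq : ∀ (ρ' : ℕ → ℕ) (X : ℕ → ℕ → Prop),
      (∀ p q, (p ∈ nodes n ∧ (q = π p ∨ q = ρ' p)) ↔ (SRel n π ρ Sp p q ∨ X p q)) →
      (∀ p q, X p q → E p q) →
      numComponents n π ρ' = ncl n E := by
    intro ρ' X hchar hsub
    have h0 : numComponents n π ρ' = ncl n (compRel n π ρ') := rfl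
    rw [h0]
    apply ncl_congr
    intro x y
    have hstepeq : (fun p q => p ∈ nodes n ∧ (q = π p ∨ q = ρ' p)) =
        (fun p q => SRel n π ρ Sp p q ∨ X p q) :=
      funext fun p => funext fun q => propext (hchar p q)
    show Relation.ReflTransGen _ x y ↔ E x y
    rw [hstepeq]
    exact closure_sub hsub x y
  have count_merge : ∀ (ρ' : ℕ → ℕ) (X : ℕ → ℕ → Prop) (u v : ℕ),
      u ∈ nodes n → v ∈ nodes n →
      (∀ p q, (p ∈ nodes n ∧ (q = π p ∨ q = ρ' p)) ↔ (SRel n π ρ Sp p q ∨ X p q)) →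
      (∀ p q, X p q → X q p) → X u v → ¬ E u v →
      (∀ p q, X p q → (E p u ∧ E v q) ∨ (E p v ∧ E u q)) →
      numComponents n π ρ' + 1 = ncl n E := by
    intro ρ' X u v hu hv hchar hXs hXuv huv hcross
    have h0 : numComponents n π ρ' = ncl n (compRel n π ρ') := rfl
    rw [h0]
    have h1 : ncl n (compRel n π ρ') =
        ncl n (fun x y => E x y ∨ (E x u ∧ E v y) ∨ (E x v ∧ E u y)) := by
      apply ncl_congr
      intro x y
      have hstepeq : (fun p q => p ∈ nodes n ∧ (q = π p ∨ q = ρ' p)) =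
          (fun p q => SRel n π ρ Sp p q ∨ X p q) :=
        funext fun p => funext fun q => propext (hchar p q)
      show Relation.ReflTransGen _ x y ↔ _
      rw [hstepeq]
      exact closure_merge (compS_symm hπ hρ hSpρ) huv hXs hXuv hcross x y
    rw [h1]
    exact ncl_merge hErefl hEsym hEtrans hu hv huv
  -- the pattern trichotomy
  obtain ⟨ya, hyaSp, hyane, hyaE, hyaU⟩ := walk hπ hρ hSpρ hSpa ha
  rcases (show ya = a ∨ ya = b ∨ ya = c ∨ ya = d from hyaSp) with hy | hy | hy | hy
  · exact absurd hy hyane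
  · -- Pattern a~b, c~d
    have Eab : E a b := hy ▸ hyaE
    have hnac : ¬ E a c := by
      intro h
      rcases hyaU c hSpc h with h' | h' <;> omega
    have hnad : ¬ E a d := by
      intro h
      rcases hyaU d hSpd h with h' | h' <;> omega
    obtain ⟨yc, hycSp, hycne, hycE, hycU⟩ := walk hπ hρ hSpρ hSpc hc
    have Ecd : E c d := by
      rcases (show yc = a ∨ yc = b ∨ yc = c ∨ yc = d from hycSp) with h' | h' | h' | h'
      · exact absurd (hEsym (h' ▸ hycE)) hnac
      · exact absurd (hEtrans Eab (hEsym (h' ▸ hycE))) hnac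
      · exact absurd h' hycne
      · exact h' ▸ hycE
    have h1 : numComponents n π ρ₁ = ncl n E := by
      apply count_eq ρ₁ X₁ charρ₁
      rintro p q (⟨rfl, rfl⟩ | ⟨rfl, rfl⟩ | ⟨rfl, rfl⟩ | ⟨rfl, rfl⟩)
      exacts [Eab, hEsym Eab, Ecd, hEsym Ecd]
    have h2 : numComponents n π ρ + 1 = ncl n E := by
      apply count_merge ρ Xρ a c ha hc charρ hXρsym (Or.inl ⟨rfl, rfl⟩) hnac
      rintro p q (⟨rfl, rfl⟩ | ⟨rfl, rfl⟩ | ⟨rfl, rfl⟩ | ⟨rfl, rfl⟩)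
      · exact Or.inl ⟨hErefl _, hErefl _⟩
      · exact Or.inr ⟨hErefl _, hErefl _⟩
      · exact Or.inl ⟨hEsym Eab, Ecd⟩
      · exact Or.inr ⟨hEsym Ecd, Eab⟩
    have h3 : numComponents n π ρ₂ + 1 = ncl n E := by
      apply count_merge ρ₂ X₂ a d ha hd charρ₂ hX₂sym (Or.inl ⟨rfl, rfl⟩) hnad
      rintro p q (⟨rfl, rfl⟩ | ⟨rfl, rfl⟩ | ⟨rfl, rfl⟩ | ⟨rfl, rfl⟩)
      · exact Or.inl ⟨hErefl _, hErefl _⟩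
      · exact Or.inr ⟨hErefl _, hErefl _⟩
      · exact Or.inl ⟨hEsym Eab, hEsym Ecd⟩
      · exact Or.inr ⟨Ecd, Eab⟩
    exact Or.inr (Or.inl ⟨by omega, by omega⟩)
  · -- Pattern a~c, b~d
    have Eac : E a c := hy ▸ hyaE
    have hnab : ¬ E a b := by
      intro h
      rcases hyaU b hSpb h with h' | h' <;> omega
    have hnad : ¬ E a d := by
      intro h
      rcases hyaU d hSpd h with h' | h' <;> omega
    obtain ⟨yb, hybSp, hybne, hybE, hybU⟩ := walk hπ hρ hSpρ hSpb hb
    have Ebd : E b d := by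
      rcases (show yb = a ∨ yb = b ∨ yb = c ∨ yb = d from hybSp) with h' | h' | h' | h'
      · exact absurd (hEsym (h' ▸ hybE)) hnab
      · exact absurd h' hybne
      · exact absurd (hEtrans Eac (hEsym (h' ▸ hybE))) hnab
      · exact h' ▸ hybE
    have h1 : numComponents n π ρ = ncl n E := by
      apply count_eq ρ Xρ charρ
      rintro p q (⟨rfl, rfl⟩ | ⟨rfl, rfl⟩ | ⟨rfl, rfl⟩ | ⟨rfl, rfl⟩)
      exacts [Eac, hEsym Eac, Ebd, hEsym Ebd]
    have h2 : numComponents n π ρ₁ + 1 = ncl n E := by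
      apply count_merge ρ₁ X₁ a b ha hb charρ₁ hX₁sym (Or.inl ⟨rfl, rfl⟩) hnab
      rintro p q (⟨rfl, rfl⟩ | ⟨rfl, rfl⟩ | ⟨rfl, rfl⟩ | ⟨rfl, rfl⟩)
      · exact Or.inl ⟨hErefl _, hErefl _⟩
      · exact Or.inr ⟨hErefl _, hErefl _⟩
      · exact Or.inl ⟨hEsym Eac, Ebd⟩
      · exact Or.inr ⟨hEsym Ebd, Eac⟩
    have h3 : numComponents n π ρ₂ + 1 = ncl n E := by
      apply count_merge ρ₂ X₂ a d ha hd charρ₂ hX₂sym (Or.inl ⟨rfl, rfl⟩) hnad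
      rintro p q (⟨rfl, rfl⟩ | ⟨rfl, rfl⟩ | ⟨rfl, rfl⟩ | ⟨rfl, rfl⟩)
      · exact Or.inl ⟨hErefl _, hErefl _⟩
      · exact Or.inr ⟨hErefl _, hErefl _⟩
      · exact Or.inr ⟨Ebd, Eac⟩
      · exact Or.inl ⟨hEsym Eac, hEsym Ebd⟩
    exact Or.inl ⟨by omega, by omega⟩
  · -- Pattern a~d, b~c
    have Ead : E a d := hy ▸ hyaE
    have hnab : ¬ E a b := by
      intro h
      rcases hyaU b hSpb h with h' | h' <;> omega
    have hnac : ¬ E a c := by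
      intro h
      rcases hyaU c hSpc h with h' | h' <;> omega
    obtain ⟨yb, hybSp, hybne, hybE, hybU⟩ := walk hπ hρ hSpρ hSpb hb
    have Ebc : E b c := by
      rcases (show yb = a ∨ yb = b ∨ yb = c ∨ yb = d from hybSp) with h' | h' | h' | h'
      · exact absurd (hEsym (h' ▸ hybE)) hnab
      · exact absurd h' hybne
      · exact h' ▸ hybE
      · exact absurd (hEtrans Ead (hEsym (h' ▸ hybE))) hnab
    have h1 : numComponents n π ρ₂ = ncl n E := by
      apply count_eq ρ₂ X₂ charρ₂
      rintro p q (⟨rfl, rfl⟩ | ⟨rfl, rfl⟩ | ⟨rfl, rfl⟩ | ⟨rfl, rfl⟩)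
      exacts [Ead, hEsym Ead, Ebc, hEsym Ebc]
    have h2 : numComponents n π ρ + 1 = ncl n E := by
      apply count_merge ρ Xρ a c ha hc charρ hXρsym (Or.inl ⟨rfl, rfl⟩) hnac
      rintro p q (⟨rfl, rfl⟩ | ⟨rfl, rfl⟩ | ⟨rfl, rfl⟩ | ⟨rfl, rfl⟩)
      · exact Or.inl ⟨hErefl _, hErefl _⟩
      · exact Or.inr ⟨hErefl _, hErefl _⟩
      · exact Or.inr ⟨Ebc, Ead⟩
      · exact Or.inl ⟨hEsym Ead, hEsym Ebc⟩
    have h3 : numComponents n π ρ₁ + 1 = ncl n E := by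
      apply count_merge ρ₁ X₁ a b ha hb charρ₁ hX₁sym (Or.inl ⟨rfl, rfl⟩) hnab
      rintro p q (⟨rfl, rfl⟩ | ⟨rfl, rfl⟩ | ⟨rfl, rfl⟩ | ⟨rfl, rfl⟩)
      · exact Or.inl ⟨hErefl _, hErefl _⟩
      · exact Or.inr ⟨hErefl _, hErefl _⟩
      · exact Or.inr ⟨hEsym Ebc, Ead⟩
      · exact Or.inl ⟨hEsym Ead, Ebc⟩
    exact Or.inr (Or.inr ⟨by omega, by omega⟩)

end DD
end

section
/- Let π and ρ be planar odd-even pairings of N = {1,…,2n}. Then (−1)^{(number of components of π ∪ ρ)} = (−1)^n · sign_OE(π) · sign_OE(ρ). -/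
open Equiv Equiv.Perm Finset

namespace DDAux

lemma sign_eq_signAux {m : ℕ} (f : Perm (Fin m)) : Perm.sign f = Perm.signAux f := by
  have key : ∀ (s : Multiset (Fin m)) (hs : ∀ x, x ∈ s), Perm.signAux3 f hs = Perm.signAux f := by
    intro s
    induction s using Quotient.inductionOn with
    | h l =>
      intro hs
      have h2 : Perm.signAux3 f hs = Perm.signAux2 l f := rfl
      rw [h2, ← Perm.signAux_eq_signAux2 l f (Equiv.refl _) (fun x _ => hs x)]
      congr 1
  have h0 : Perm.sign f = Perm.signAux3 f (fun x => Finset.mem_univ_val x) := rfl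
  rw [h0, key]

/-- sign as (-1)^(number of inversions). -/
lemma sign_eq_pow_inversions {m : ℕ} (f : Perm (Fin m)) :
    (Perm.sign f : ℤ) =
      (-1 : ℤ) ^ ((Finset.univ ×ˢ Finset.univ).filter
        (fun p : Fin m × Fin m => p.1 < p.2 ∧ f p.2 < f p.1)).card := by
  rw [sign_eq_signAux]
  unfold Perm.signAux
  rw [Finset.prod_ite, Finset.prod_const, Finset.prod_const_one, mul_one]
  have hcard : ((Perm.finPairsLT m).filter (fun x => f x.1 ≤ f x.2)).card
      = ((Finset.univ ×ˢ Finset.univ).filter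
        (fun p : Fin m × Fin m => p.1 < p.2 ∧ f p.2 < f p.1)).card := by
    apply Finset.card_bij (fun x _ => (x.2, x.1))
    · intro x hx
      simp only [Finset.mem_filter, Perm.mem_finPairsLT] at hx
      simp only [Finset.mem_filter, Finset.mem_product, Finset.mem_univ, true_and]
      refine ⟨hx.1, lt_of_le_of_ne hx.2 ?_⟩
      intro h
      exact absurd (f.injective h) (ne_of_gt hx.1)
    · intro x hx y hy hxy
      simp only [Prod.mk.injEq] at hxy
      exact Sigma.ext_iff.mpr ⟨hxy.2, heq_of_eq hxy.1⟩
    · intro p hp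
      simp only [Finset.mem_filter, Finset.mem_product, Finset.mem_univ, true_and] at hp
      exact ⟨⟨p.2, p.1⟩, by
        simp only [Finset.mem_filter, Perm.mem_finPairsLT]
        exact ⟨hp.1, le_of_lt hp.2⟩, rfl⟩
  rw [hcard]
  push_cast
  ring

section Orb

variable {α : Type*} [Fintype α] [DecidableEq α]

/-- The cycle (orbit) of `a` under `σ` as a finset. -/
def cls (σ : Perm α) (a : α) : Finset α := Finset.univ.filter (σ.SameCycle a)

lemma mem_cls {σ : Perm α} {a b : α} : b ∈ cls σ a ↔ σ.SameCycle a b := by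
  simp [cls]

lemma self_mem_cls {σ : Perm α} {a : α} : a ∈ cls σ a := mem_cls.mpr (Perm.SameCycle.refl _ _)

lemma cls_eq_of_sameCycle {σ : Perm α} {a b : α} (h : σ.SameCycle a b) :
    cls σ a = cls σ b := by
  ext x; simp only [mem_cls]
  exact ⟨fun hx => h.symm.trans hx, fun hx => h.trans hx⟩

lemma cls_fixed {σ : Perm α} {a : α} (h : σ a = a) : cls σ a = {a} := by
  ext b
  simp only [mem_cls, Finset.mem_singleton]
  constructor
  · rintro ⟨k, hk⟩
    rw [Perm.zpow_apply_eq_self_of_apply_eq_self h k] at hk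
    exact hk.symm
  · rintro rfl; exact Perm.SameCycle.refl _ _

lemma cls_subset_support {σ : Perm α} {a : α} (h : a ∈ σ.support) :
    cls σ a ⊆ σ.support := by
  intro b hb
  obtain ⟨k, hk⟩ := mem_cls.mp hb
  rw [Perm.mem_support] at h ⊢
  intro hb'
  apply h
  have hc : σ ((σ ^ k) a) = (σ ^ k) (σ a) := by
    rw [← Perm.mul_apply, ← Perm.mul_apply]
    congr 1
    exact ((Commute.refl σ).zpow_right k).eq
  rw [hk] at hc
  rw [hb'] at hc
  rw [← hk] at hc
  exact (σ ^ k).injective hc.symm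

/-- Number of orbits of `σ`. -/
def orb (σ : Perm α) : ℕ := (Finset.univ.image (cls σ)).card

lemma image_split (g : α → Finset α) (S : Finset α)
    (h1 : ∀ a, a ∉ S → g a = {a}) (h2 : ∀ a ∈ S, g a ⊆ S) (h3 : ∀ a, a ∈ g a) :
    (Finset.univ.image g).card = (S.image g).card + Sᶜ.card := by
  have hu : (Finset.univ : Finset α) = S ∪ Sᶜ := by simp
  rw [hu, Finset.image_union]
  rw [Finset.card_union_of_disjoint]
  · congr 1
    have : Sᶜ.image g = Sᶜ.image (fun a => ({a} : Finset α)) := by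
      apply Finset.image_congr
      intro a ha
      exact h1 a (by simpa using ha)
    rw [this]
    exact Finset.card_image_of_injective _ (fun a b hab => Finset.singleton_inj.mp hab)
  · rw [Finset.disjoint_left]
    rintro C hC hC'
    obtain ⟨a, ha, rfl⟩ := Finset.mem_image.mp hC
    obtain ⟨b, hb, hba⟩ := Finset.mem_image.mp hC'
    rw [Finset.mem_compl] at hb
    rw [h1 b hb] at hba
    have : a ∈ ({b} : Finset α) := hba ▸ h3 a
    rw [Finset.mem_singleton] at this
    exact hb (this ▸ ha)

lemma orb_split (g : α → Finset α) (S : Finset α)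
    (h1 : ∀ a, a ∉ S → g a = {a}) (h2 : ∀ a ∈ S, g a ⊆ S) (h3 : ∀ a, a ∈ g a) :
    (Finset.univ.image g).card + S.card = (S.image g).card + Fintype.card α := by
  rw [image_split g S h1 h2 h3, Finset.card_compl]
  have := Finset.card_le_univ S
  omega

end Orb

end DDAux

namespace DDAux
section Orb2
open DDAux
variable {α : Type*} [Fintype α] [DecidableEq α]

lemma cls_one (a : α) : cls (1 : Perm α) a = {a} := cls_fixed rfl

lemma cls_mul_left {σ τ : Perm α} (h : σ.Disjoint τ) {a : α} (ha : a ∈ σ.support) :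
    cls (σ * τ) a = cls σ a := by
  have hτa : τ a = a := by
    rcases h a with h' | h'
    · exact absurd h' (Perm.mem_support.mp ha)
    · exact h'
  ext b
  simp only [mem_cls]
  have hpow : ∀ k : ℤ, ((σ * τ) ^ k) a = (σ ^ k) a := by
    intro k
    rw [h.commute.mul_zpow, Perm.mul_apply, Perm.zpow_apply_eq_self_of_apply_eq_self hτa k]
  constructor
  · rintro ⟨k, hk⟩; exact ⟨k, by rw [← hpow k]; exact hk⟩
  · rintro ⟨k, hk⟩; exact ⟨k, by rw [hpow k]; exact hk⟩

lemma orb_one : orb (1 : Perm α) = Fintype.card α := by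
  unfold orb
  have : Finset.univ.image (cls (1 : Perm α)) = Finset.univ.image (fun a => ({a} : Finset α)) :=
    Finset.image_congr (fun a _ => cls_one a)
  rw [this, Finset.card_image_of_injective _ (fun a b hab => Finset.singleton_inj.mp hab),
    Finset.card_univ]

lemma orb_isCycle {σ : Perm α} (h : σ.IsCycle) :
    orb σ + σ.support.card = 1 + Fintype.card α := by
  obtain ⟨x, hx, -⟩ := id h
  have hxs : x ∈ σ.support := Perm.mem_support.mpr hx
  have hsplit := orb_split (cls σ) σ.support
    (fun a ha => cls_fixed (by simpa [Perm.mem_support, not_not] using ha))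
    (fun a ha => cls_subset_support ha)
    (fun a => self_mem_cls)
  have himg : σ.support.image (cls σ) = {cls σ x} := by
    have : σ.support.image (cls σ) = σ.support.image (fun _ => cls σ x) := by
      apply Finset.image_congr
      intro a ha
      exact cls_eq_of_sameCycle (h.sameCycle (Perm.mem_support.mp (Finset.mem_coe.mp ha)) hx)
    rw [this, Finset.image_const ⟨x, hxs⟩]
  rw [himg, Finset.card_singleton] at hsplit
  unfold orb
  omega

lemma orb_disjoint_mul {σ τ : Perm α} (h : σ.Disjoint τ) :
    orb (σ * τ) + Fintype.card α = orb σ + orb τ := by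
  classical
  set S := σ.support with hS
  set T := τ.support with hT
  have hdisj : _root_.Disjoint S T := Perm.disjoint_iff_disjoint_support.mp h
  -- orbit splits for σ and τ
  have hsσ := orb_split (cls σ) S
    (fun a ha => cls_fixed (by simpa [hS, Perm.mem_support, not_not] using ha))
    (fun a ha => cls_subset_support ha) (fun a => self_mem_cls)
  have hsτ := orb_split (cls τ) T
    (fun a ha => cls_fixed (by simpa [hT, Perm.mem_support, not_not] using ha))
    (fun a ha => cls_subset_support ha) (fun a => self_mem_cls)
  -- orbit split for σ * τ over S ∪ T
  have hsupp : (σ * τ).support = S ∪ T := h.support_mul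
  have hsστ := orb_split (cls (σ * τ)) (S ∪ T)
    (fun a ha => cls_fixed (by
      have : a ∉ (σ * τ).support := by rw [hsupp]; exact ha
      simpa [Perm.mem_support, not_not] using this))
    (fun a ha => by rw [← hsupp]; exact cls_subset_support (by rw [hsupp]; exact ha))
    (fun a => self_mem_cls)
  -- image over S ∪ T splits
  have himg : ((S ∪ T).image (cls (σ * τ))).card = (S.image (cls σ)).card + (T.image (cls τ)).card := by
    rw [Finset.image_union]
    have h1 : S.image (cls (σ * τ)) = S.image (cls σ) :=
      Finset.image_congr (fun a ha => cls_mul_left h ha)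
    have h2 : T.image (cls (σ * τ)) = T.image (cls τ) := by
      apply Finset.image_congr
      intro a ha
      have := cls_mul_left h.symm (a := a) (by exact ha)
      rw [h.commute.eq]
      exact this
    rw [h1, h2]
    apply Finset.card_union_of_disjoint
    rw [Finset.disjoint_left]
    rintro C hC hC'
    obtain ⟨a, ha, rfl⟩ := Finset.mem_image.mp hC
    obtain ⟨b, hb, hba⟩ := Finset.mem_image.mp hC'
    have haS : a ∈ cls σ a := self_mem_cls
    have : a ∈ cls τ b := hba ▸ haS
    have haT : a ∈ T := cls_subset_support hb this
    exact Finset.disjoint_left.mp hdisj (cls_subset_support ha haS) haT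
  have hcard : (S ∪ T).card = S.card + T.card := Finset.card_union_of_disjoint hdisj
  have hle : (S ∪ T).card ≤ Fintype.card α := Finset.card_le_univ _
  unfold orb
  omega

lemma sign_mul_orb (σ : Perm α) :
    (Perm.sign σ : ℤ) * (-1 : ℤ) ^ (orb σ) = (-1 : ℤ) ^ (Fintype.card α) := by
  induction σ using Perm.cycle_induction_on with
  | base_one => simp [orb_one]
  | base_cycles σ hσ =>
    have hsign := hσ.sign
    have horb := orb_isCycle hσ
    have hle : σ.support.card ≤ Fintype.card α := Finset.card_le_univ _
    have h1 : orb σ = 1 + Fintype.card α - σ.support.card := by omega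
    have hcast : (Perm.sign σ : ℤ) = -(-1 : ℤ) ^ σ.support.card := by
      rw [hsign]; simp
    rw [hcast, h1]
    have h2 : 1 + Fintype.card α - σ.support.card + σ.support.card = 1 + Fintype.card α := by omega
    have := pow_add (-1 : ℤ) (1 + Fintype.card α - σ.support.card) σ.support.card
    rw [h2] at this
    have h3 : (-1 : ℤ) ^ (1 + Fintype.card α) = -(-1 : ℤ) ^ (Fintype.card α) := by
      rw [pow_add]; ring
    nlinarith [this, h3, sq_nonneg ((-1 : ℤ) ^ σ.support.card)]
  | induction_disjoint σ τ hd hc ihσ ihτ =>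
    have key := orb_disjoint_mul hd
    have hmul : (Perm.sign (σ * τ) : ℤ) = (Perm.sign σ : ℤ) * (Perm.sign τ : ℤ) := by
      rw [Perm.sign_mul]; simp
    have hpow : (-1 : ℤ) ^ (orb (σ * τ)) * (-1 : ℤ) ^ (Fintype.card α)
        = (-1 : ℤ) ^ (orb σ) * (-1 : ℤ) ^ (orb τ) := by
      rw [← pow_add, ← pow_add, key]
    have hne : (-1 : ℤ) ^ (Fintype.card α) ≠ 0 := by positivity
    have : (Perm.sign (σ * τ) : ℤ) * (-1 : ℤ) ^ (orb (σ * τ)) * (-1 : ℤ) ^ (Fintype.card α)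
        = (-1 : ℤ) ^ (Fintype.card α) * (-1 : ℤ) ^ (Fintype.card α) := by
      rw [mul_assoc, hpow, hmul]
      calc (Perm.sign σ : ℤ) * (Perm.sign τ : ℤ) * ((-1:ℤ) ^ orb σ * (-1:ℤ) ^ orb τ)
          = ((Perm.sign σ : ℤ) * (-1:ℤ) ^ orb σ) * ((Perm.sign τ : ℤ) * (-1:ℤ) ^ orb τ) := by ring
        _ = _ := by rw [ihσ, ihτ]
    exact mul_right_cancel₀ hne this

lemma card_image_congr {β γ : Type*} [DecidableEq β] [DecidableEq γ]
    (s : Finset α) (f : α → β) (g : α → γ)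
    (h : ∀ a ∈ s, ∀ a' ∈ s, (f a = f a' ↔ g a = g a')) :
    (s.image f).card = (s.image g).card := by
  classical
  apply Finset.card_bij (fun b hb => g (Finset.mem_image.mp hb).choose)
  · intro b hb
    have hspec := (Finset.mem_image.mp hb).choose_spec
    exact Finset.mem_image.mpr ⟨_, hspec.1, rfl⟩
  · intro b hb b' hb' hbb'
    have hs := (Finset.mem_image.mp hb).choose_spec
    have hs' := (Finset.mem_image.mp hb').choose_spec
    rw [← hs.2, ← hs'.2]
    exact (h _ hs.1 _ hs'.1).mpr hbb'
  · intro c hc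
    obtain ⟨a, ha, rfl⟩ := Finset.mem_image.mp hc
    refine ⟨f a, Finset.mem_image.mpr ⟨a, ha, rfl⟩, ?_⟩
    have hs := (Finset.mem_image.mp (Finset.mem_image.mpr ⟨a, ha, rfl⟩ : f a ∈ s.image f)).choose_spec
    exact (h _ hs.1 _ ha).mp hs.2

end Orb2
end DDAux


namespace DD

section Proof11

open Equiv Finset DDAux

variable {n : ℕ} {π ρ : ℕ → ℕ}

lemma mem_nodes {m : ℕ} : m ∈ nodes n ↔ 1 ≤ m ∧ m ≤ 2 * n := Finset.mem_Icc

lemma odd_mem (i : Fin n) : 2 * (i : ℕ) + 1 ∈ nodes n := by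
  have := i.isLt; rw [mem_nodes]; omega

lemma even_mem (j : Fin n) : 2 * (j : ℕ) + 2 ∈ nodes n := by
  have := j.isLt; rw [mem_nodes]; omega

lemma exists_oe (hp : IsPairing n π) (hoe : IsOE n π) (i : Fin n) :
    ∃ j : Fin n, π (2 * (i : ℕ) + 1) = 2 * (j : ℕ) + 2 := by
  have hm := odd_mem i
  have h1 := hp.maps _ hm
  have h2 := hoe _ hm
  rw [mem_nodes] at h1
  refine ⟨⟨π (2 * (i : ℕ) + 1) / 2 - 1, by omega⟩, by simp only []; omega⟩

/-- The permutation of `Fin n` induced by an odd-even pairing. -/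
noncomputable def OEperm (hp : IsPairing n π) (hoe : IsOE n π) : Equiv.Perm (Fin n) :=
  Equiv.ofBijective (fun i => (exists_oe hp hoe i).choose)
    (by
      rw [← Finite.injective_iff_bijective]
      intro i i' hii'
      have hval : (exists_oe hp hoe i).choose = (exists_oe hp hoe i').choose := hii'
      have h1 := (exists_oe hp hoe i).choose_spec
      have h2 := (exists_oe hp hoe i').choose_spec
      have hcong := congrArg (fun t : Fin n => 2 * (t : ℕ) + 2) hval
      replace hcong : 2 * ((exists_oe hp hoe i).choose : ℕ) + 2 = 2 * ((exists_oe hp hoe i').choose : ℕ) + 2 := hcong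
      have h3 : π (2 * (i : ℕ) + 1) = π (2 * (i' : ℕ) + 1) := by rw [h1, h2, hcong]
      have h4 := hp.invol _ (odd_mem i)
      have h5 := hp.invol _ (odd_mem i')
      rw [h3, h5] at h4
      exact Fin.ext (by omega))

lemma OEperm_apply (hp : IsPairing n π) (hoe : IsOE n π) (i : Fin n) :
    π (2 * (i : ℕ) + 1) = 2 * ((OEperm hp hoe i : Fin n) : ℕ) + 2 :=
  (exists_oe hp hoe i).choose_spec

lemma OEperm_symm_apply (hp : IsPairing n π) (hoe : IsOE n π) (j : Fin n) :
    π (2 * (j : ℕ) + 2) = 2 * (((OEperm hp hoe).symm j : Fin n) : ℕ) + 1 := by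
  have h1 := OEperm_apply hp hoe ((OEperm hp hoe).symm j)
  rw [Equiv.apply_symm_apply] at h1
  have h2 := hp.invol _ (odd_mem ((OEperm hp hoe).symm j))
  rw [h1] at h2
  exact h2

/-- Part A: `signOE` equals the sign of the induced permutation. -/
lemma signOE_eq_sign (hp : IsPairing n π) (hoe : IsOE n π) :
    signOE n π = ((Equiv.Perm.sign (OEperm hp hoe) : ℤˣ) : ℤ) := by
  set f := OEperm hp hoe with hf
  rw [DDAux.sign_eq_pow_inversions]
  unfold signOE
  congr 1
  symm
  apply Finset.card_bij (fun (q : Fin n × Fin n) _ => ((2 * (q.1 : ℕ) + 1, 2 * (q.2 : ℕ) + 1) : ℕ × ℕ))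
  · intro q hq
    simp only [Finset.mem_filter, Finset.mem_product, Finset.mem_univ, true_and] at hq
    simp only [Finset.mem_filter, Finset.mem_product]
    have e1 := OEperm_apply hp hoe q.1
    have e2 := OEperm_apply hp hoe q.2
    rw [← hf] at e1 e2
    refine ⟨⟨odd_mem q.1, odd_mem q.2⟩, by omega, by omega, by
      have hlt : ((f q.2 : Fin n) : ℕ) < ((f q.1 : Fin n) : ℕ) := hq.2
      rw [e1, e2]; omega⟩
  · intro q hq q' hq' h
    simp only [Prod.mk.injEq] at h
    exact Prod.ext (Fin.ext (by omega)) (Fin.ext (by omega))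
  · intro p hp'
    simp only [Finset.mem_filter, Finset.mem_product] at hp'
    obtain ⟨⟨hp1, hp2⟩, ho1, ho2, hlt, hinv⟩ := hp'
    rw [mem_nodes] at hp1 hp2
    refine ⟨(⟨p.1 / 2, by omega⟩, ⟨p.2 / 2, by omega⟩), ?_, ?_⟩
    · simp only [Finset.mem_filter, Finset.mem_product, Finset.mem_univ, true_and]
      have e1 := OEperm_apply hp hoe (⟨p.1 / 2, by omega⟩ : Fin n)
      have e2 := OEperm_apply hp hoe (⟨p.2 / 2, by omega⟩ : Fin n)
      rw [← hf] at e1 e2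
      simp only at e1 e2
      have hq1 : 2 * (p.1 / 2) + 1 = p.1 := by omega
      have hq2 : 2 * (p.2 / 2) + 1 = p.2 := by omega
      rw [hq1] at e1
      rw [hq2] at e2
      constructor
      · show (p.1 / 2 : ℕ) < (p.2 / 2 : ℕ); omega
      · show ((f _ : Fin n) : ℕ) < ((f _ : Fin n) : ℕ)
        omega
    · refine Prod.ext ?_ ?_
      · show 2 * (p.1 / 2) + 1 = p.1
        omega
      · show 2 * (p.2 / 2) + 1 = p.2
        omega

section PartB

variable (hpπ : IsPairing n π) (hπoe : IsOE n π) (hpρ : IsPairing n ρ) (hρoe : IsOE n ρ)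

lemma compRel_mem {a b : ℕ} (h : compRel n π ρ a b) (ha : a ∈ nodes n)
    (hπm : ∀ i ∈ nodes n, π i ∈ nodes n) (hρm : ∀ i ∈ nodes n, ρ i ∈ nodes n) :
    b ∈ nodes n := by
  induction h with
  | refl => exact ha
  | tail _ hstep ih =>
    obtain ⟨hb, hc⟩ := hstep
    rcases hc with rfl | rfl
    · exact hπm _ hb
    · exact hρm _ hb

lemma compRel_symm (hpπ' : IsPairing n π) (hpρ' : IsPairing n ρ) {a b : ℕ}
    (h : compRel n π ρ a b) (ha : a ∈ nodes n) : compRel n π ρ b a := by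
  induction h with
  | refl => exact Relation.ReflTransGen.refl
  | @tail b c _ hstep ih =>
    obtain ⟨hb, hc⟩ := hstep
    have hcmem : c ∈ nodes n := by
      rcases hc with rfl | rfl
      · exact hpπ'.maps _ hb
      · exact hpρ'.maps _ hb
    refine Relation.ReflTransGen.trans (Relation.ReflTransGen.single ⟨hcmem, ?_⟩) ih
    rcases hc with rfl | rfl
    · exact Or.inl (hpπ'.invol _ hb).symm
    · exact Or.inr (hpρ'.invol _ hb).symm

open scoped Classical in
lemma filter_compRel_eq (hpπ' : IsPairing n π) (hpρ' : IsPairing n ρ) {a b : ℕ}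
    (h : compRel n π ρ a b) (ha : a ∈ nodes n) :
    (nodes n).filter (fun x => compRel n π ρ a x) = (nodes n).filter (fun x => compRel n π ρ b x) := by
  have hsymm := compRel_symm hpπ' hpρ' h ha
  ext x
  simp only [Finset.mem_filter, and_congr_right_iff]
  intro _
  exact ⟨fun hx => Relation.ReflTransGen.trans hsymm hx, fun hx => Relation.ReflTransGen.trans h hx⟩

/-- The composed permutation whose cycles are the components. -/
noncomputable def compPerm : Equiv.Perm (Fin n) :=
  (OEperm hpπ hπoe).trans (OEperm hpρ hρoe).symm

lemma compPerm_apply (i : Fin n) :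
    compPerm hpπ hπoe hpρ hρoe i = (OEperm hpρ hρoe).symm (OEperm hpπ hπoe i) := rfl

lemma compPerm_symm_apply (j : Fin n) :
    (compPerm hpπ hπoe hpρ hρoe).symm j = (OEperm hpπ hπoe).symm (OEperm hpρ hρoe j) := rfl

/-- B1: anything reachable from an odd node is described by the cycle of `σ`. -/
lemma reach_form {i : Fin n} {b : ℕ} (h : compRel n π ρ (2 * (i : ℕ) + 1) b) :
    ∃ j : Fin n, (compPerm hpπ hπoe hpρ hρoe).SameCycle i j ∧
      (b = 2 * (j : ℕ) + 1 ∨ b = 2 * ((OEperm hpπ hπoe j : Fin n) : ℕ) + 2) := by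
  set σ := compPerm hpπ hπoe hpρ hρoe with hσ
  set P := OEperm hpπ hπoe with hP
  set R := OEperm hpρ hρoe with hR
  induction h with
  | refl => exact ⟨i, Equiv.Perm.SameCycle.refl _ _, Or.inl rfl⟩
  | @tail b c _ hstep ih =>
    obtain ⟨j, hsc, hform⟩ := ih
    obtain ⟨hb, hc⟩ := hstep
    rcases hform with rfl | rfl
    · -- b = 2j+1 odd
      rcases hc with rfl | rfl
      · exact ⟨j, hsc, Or.inr (by rw [OEperm_apply hpπ hπoe j])⟩
      · -- ρ(2j+1) = 2 (R j) + 2 = 2 (P (σ⁻¹ j)) + 2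
        refine ⟨σ.symm j, ?_, Or.inr ?_⟩
        · have : σ.SameCycle i (σ⁻¹ j) := Equiv.Perm.sameCycle_symm_apply_right.mpr hsc
          exact this
        · rw [OEperm_apply hpρ hρoe j, ← hR]
          have : P (σ.symm j) = R j := by
            rw [hσ, compPerm_symm_apply, ← hP, ← hR, Equiv.apply_symm_apply]
          rw [this]
    · -- b = 2 (P j) + 2 even
      rcases hc with rfl | rfl
      · refine ⟨j, hsc, Or.inl ?_⟩
        rw [OEperm_symm_apply hpπ hπoe (P j), ← hP, Equiv.symm_apply_apply]
      · refine ⟨σ j, Equiv.Perm.SameCycle.apply_right hsc, Or.inl ?_⟩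
        rw [OEperm_symm_apply hpρ hρoe (P j), ← hR]
        rfl

/-- B2: same cycle implies reachable. -/
lemma sameCycle_reach {i j : Fin n}
    (h : (compPerm hpπ hπoe hpρ hρoe).SameCycle i j) :
    compRel n π ρ (2 * (i : ℕ) + 1) (2 * (j : ℕ) + 1) := by
  classical
  set σ := compPerm hpπ hπoe hpρ hρoe with hσ
  set P := OEperm hpπ hπoe with hP
  set R := OEperm hpρ hρoe with hR
  obtain ⟨k, hk0, hkb, hk⟩ := Equiv.Perm.SameCycle.exists_pow_eq σ h
  clear hk0 hkb h
  induction k generalizing j with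
  | zero =>
    simp only [pow_zero, Equiv.Perm.coe_one, id_eq] at hk
    rw [← hk]
    exact Relation.ReflTransGen.refl
  | succ m ih =>
    have hprev := ih (j := (σ ^ m) i) rfl
    have hstep1 : compRel n π ρ (2 * (((σ ^ m) i : Fin n) : ℕ) + 1) (2 * ((j : Fin n) : ℕ) + 1) := by
      have hj : j = σ ((σ ^ m) i) := by
        rw [← hk, pow_succ', Equiv.Perm.mul_apply]
      set m' := (σ ^ m) i with hm'
      have s1 : compRel n π ρ (2 * (m' : ℕ) + 1) (2 * ((P m' : Fin n) : ℕ) + 2) :=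
        Relation.ReflTransGen.single ⟨odd_mem m', Or.inl (OEperm_apply hpπ hπoe m').symm⟩
      have s2 : compRel n π ρ (2 * ((P m' : Fin n) : ℕ) + 2) (2 * ((σ m' : Fin n) : ℕ) + 1) := by
        refine Relation.ReflTransGen.single ⟨even_mem _, Or.inr ?_⟩
        rw [OEperm_symm_apply hpρ hρoe (P m'), ← hR]
        rw [hσ, compPerm_apply, ← hP, ← hR]
      rw [hj]
      exact Relation.ReflTransGen.trans s1 s2
    exact Relation.ReflTransGen.trans hprev hstep1

open scoped Classical in
/-- Part B: the number of components equals the number of cycles of `compPerm`. -/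
lemma numComponents_eq :
    numComponents n π ρ = DDAux.orb (compPerm hpπ hπoe hpρ hρoe) := by
  set σ := compPerm hpπ hπoe hpρ hρoe with hσ
  set P := OEperm hpπ hπoe with hP
  set R := OEperm hpρ hρoe with hR
  unfold numComponents
  have himg : (nodes n).image (fun a => (nodes n).filter (fun b => compRel n π ρ a b))
      = Finset.univ.image (fun i : Fin n =>
          (nodes n).filter (fun b => compRel n π ρ (2 * (i : ℕ) + 1) b)) := by
    ext s
    simp only [Finset.mem_image, Finset.mem_univ, true_and]
    constructor
    · rintro ⟨a, ha, rfl⟩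
      have hma := mem_nodes.mp ha
      rcases Nat.even_or_odd a with he | ho
      · -- a even: a = 2j+2
        have hj : a = 2 * (a / 2 - 1) + 2 := by
          obtain ⟨t, ht⟩ := he; omega
        have hjlt : a / 2 - 1 < n := by obtain ⟨t, ht⟩ := he; omega
        set j : Fin n := ⟨a / 2 - 1, hjlt⟩ with hjdef
        have haj : a = 2 * (j : ℕ) + 2 := hj
        refine ⟨P.symm j, ?_⟩
        have hstep : compRel n π ρ a (2 * ((P.symm j : Fin n) : ℕ) + 1) := by
          refine Relation.ReflTransGen.single ⟨ha, Or.inl ?_⟩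
          rw [haj, OEperm_symm_apply hpπ hπoe j]
        exact (filter_compRel_eq hpπ hpρ hstep ha).symm
      · obtain ⟨t, ht⟩ := ho
        have htlt : t < n := by omega
        refine ⟨⟨t, htlt⟩, ?_⟩
        have hat : a = 2 * ((⟨t, htlt⟩ : Fin n) : ℕ) + 1 := by simpa using ht
        subst hat
        rfl
    · rintro ⟨i, rfl⟩
      exact ⟨2 * (i : ℕ) + 1, odd_mem i, rfl⟩
  rw [himg]
  unfold DDAux.orb
  apply DDAux.card_image_congr
  intro i _ i' _
  have hiff : ∀ (a b : Fin n),
      ((nodes n).filter (fun x => compRel n π ρ (2 * (a : ℕ) + 1) x)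
        = (nodes n).filter (fun x => compRel n π ρ (2 * (b : ℕ) + 1) x))
      ↔ σ.SameCycle a b := by
    intro a b
    constructor
    · intro heq
      have hbmem : (2 * (b : ℕ) + 1) ∈ (nodes n).filter (fun x => compRel n π ρ (2 * (b : ℕ) + 1) x) :=
        Finset.mem_filter.mpr ⟨odd_mem b, Relation.ReflTransGen.refl⟩
      rw [← heq] at hbmem
      have hreach := (Finset.mem_filter.mp hbmem).2
      obtain ⟨j, hsc, hform⟩ := reach_form hpπ hπoe hpρ hρoe hreach
      rcases hform with hodd | heven
      · have : b = j := Fin.ext (by omega)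
        rw [this]; exact hsc
      · omega
    · intro hsc
      exact filter_compRel_eq hpπ hpρ (sameCycle_reach hpπ hπoe hpρ hρoe hsc) (odd_mem a)
  have hcls : ∀ (a b : Fin n), (DDAux.cls σ a = DDAux.cls σ b) ↔ σ.SameCycle a b := by
    intro a b
    constructor
    · intro heq
      have : b ∈ DDAux.cls σ b := DDAux.self_mem_cls
      rw [← heq] at this
      exact DDAux.mem_cls.mp this
    · exact DDAux.cls_eq_of_sameCycle
  rw [hiff, ← hcls]

end PartB

end Proof11


/-- for planar odd-even pairings `π` and `ρ`,
`(−1)^{#components of π ∪ ρ} = (−1)^n · sign_OE(π) · sign_OE(ρ)`. -/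
theorem statement11 (n : ℕ) (π ρ : ℕ → ℕ)
    (hπ : IsPairing n π) (hρ : IsPairing n ρ)
    (hπoe : IsOE n π) (hρoe : IsOE n ρ)
    (hπpl : IsPlanar n π) (hρpl : IsPlanar n ρ) :
    (-1 : ℤ) ^ (numComponents n π ρ)
      = (-1 : ℤ) ^ n * signOE n π * signOE n ρ := by
  classical
  set σ := compPerm hπ hπoe hρ hρoe with hσ
  have hnum := numComponents_eq hπ hπoe hρ hρoe
  have hsign := DDAux.sign_mul_orb σ
  rw [Fintype.card_fin] at hsign
  have hσsign : ((Equiv.Perm.sign σ : ℤˣ) : ℤ) = signOE n π * signOE n ρ := by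
    rw [signOE_eq_sign hπ hπoe, signOE_eq_sign hρ hρoe]
    have hdecomp : Equiv.Perm.sign σ
        = Equiv.Perm.sign (OEperm hρ hρoe) * Equiv.Perm.sign (OEperm hπ hπoe) := by
      rw [hσ]
      unfold compPerm
      rw [Equiv.Perm.sign_trans, Equiv.Perm.sign_symm]
    rw [hdecomp]
    push_cast [Units.val_mul]
    ring
  rw [hnum, ← hσ]
  have hs2 : ((Equiv.Perm.sign σ : ℤˣ) : ℤ) * ((Equiv.Perm.sign σ : ℤˣ) : ℤ) = 1 := by
    rcases Int.units_eq_one_or (Equiv.Perm.sign σ) with h | h <;> rw [h] <;> norm_num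
  calc (-1 : ℤ) ^ (DDAux.orb σ)
      = (((Equiv.Perm.sign σ : ℤˣ) : ℤ) * ((Equiv.Perm.sign σ : ℤˣ) : ℤ)) * (-1 : ℤ) ^ (DDAux.orb σ) := by
        rw [hs2, one_mul]
    _ = ((Equiv.Perm.sign σ : ℤˣ) : ℤ) * (((Equiv.Perm.sign σ : ℤˣ) : ℤ) * (-1 : ℤ) ^ (DDAux.orb σ)) := by
        ring
    _ = ((Equiv.Perm.sign σ : ℤˣ) : ℤ) * (-1 : ℤ) ^ n := by rw [hsign]
    _ = (-1 : ℤ) ^ n * signOE n π * signOE n ρ := by rw [hσsign]; ring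

end DD
end
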